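/- arXiv:0907.5137 — 5 statements merged into one kernel-verified Lean document; each statement's English description precedes it below -/
import Mathlib

section
/- For all binary strings X, Y ∈ {0,1}^n, the LCS length of X and Y equals the maximum, over all admissible vectors v ∈ V, of the score |v| + Σ_{i=1}^{|v|} S_v(i) + r_v (the empty vector is admissible, with score equal to the minimum of the number of zeros in X and the number of zeros in Y). -/
open scoped BigOperators
open Classical

noncomputable section

/-- Length of a longest common subsequence of two boolean lists. -/
def lcsLen (x y : List Bool) : ℕ :=
  sSup {k : ℕ | ∃ z : List Bool, z.length = k ∧ z.Sublist x ∧ z.Sublist y}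

/-- Number of zeros of x among positions a, a+1, …, b. -/
def zeroCount (x : ℕ → Bool) (a b : ℕ) : ℕ :=
  ((Finset.Icc a b).filter fun i => x i = false).card

/-- The pair (s, t) is a candidate next pair of matched ones after (p, q), for the
zero-difference u: p < s ≤ n, q < t ≤ n, X_s = Y_t = 1, and
(#zeros of X in [p+1, s]) − (#zeros of Y in [q+1, t]) = u. -/
def StepProp (x y : ℕ → Bool) (n : ℕ) (u : ℤ) (p q s t : ℕ) : Prop :=
  p < s ∧ q < t ∧ s ≤ n ∧ t ≤ n ∧ x s = true ∧ y t = true ∧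
    (zeroCount x (p + 1) s : ℤ) - (zeroCount y (q + 1) t : ℤ) = u

/-- π, ν realize the alignment associated with the vector v: π(0) = ν(0) = 0 and
(π(i+1), ν(i+1)) is the lexicographically smallest candidate pair after (π(i), ν(i)) for the
zero-difference v_{i+1}.  `v` is admissible iff such π, ν exist. -/
def IsAlignment (x y : ℕ → Bool) (n : ℕ) (v : List ℤ) (piF nuF : ℕ → ℕ) : Prop :=
  piF 0 = 0 ∧ nuF 0 = 0 ∧
    ∀ i : ℕ, ∀ hi : i < v.length,
      StepProp x y n (v.get ⟨i, hi⟩) (piF i) (nuF i) (piF (i + 1)) (nuF (i + 1)) ∧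
      ∀ s t : ℕ, StepProp x y n (v.get ⟨i, hi⟩) (piF i) (nuF i) s t →
        piF (i + 1) < s ∨ (piF (i + 1) = s ∧ nuF (i + 1) ≤ t)

/-- The score of the alignment v (realized by π, ν): one matched pair of ones per cell, the
maximal number of matched zeros in each cell, plus the matched zeros after the last cell. -/
def score (x y : ℕ → Bool) (n : ℕ) (v : List ℤ) (piF nuF : ℕ → ℕ) : ℕ :=
  v.length +
    (∑ i ∈ Finset.range v.length,
      min (zeroCount x (piF i + 1) (piF (i + 1))) (zeroCount y (nuF i + 1) (nuF (i + 1)))) +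
    min (zeroCount x (piF v.length + 1) n) (zeroCount y (nuF v.length + 1) n)

/-- LCS length of the strings (x 1, …, x n) and (y 1, …, y n). -/
def lcsN (x y : ℕ → Bool) (n : ℕ) : ℕ :=
  lcsLen (List.ofFn fun i : Fin n => x (i.val + 1)) (List.ofFn fun i : Fin n => y (i.val + 1))

def seg (x : ℕ → Bool) (a b : ℕ) : List Bool := (List.range' (a+1) (b - a)).map x

section Lemmas
variable (x y : ℕ → Bool) (n : ℕ)

lemma seg_nil {a b : ℕ} (h : b ≤ a) : seg x a b = [] := by
  simp [seg, Nat.sub_eq_zero_of_le h]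

lemma seg_cons {a b : ℕ} (h : a < b) : seg x a b = x (a+1) :: seg x (a+1) b := by
  rw [seg, show b - a = (b - (a+1)) + 1 by omega, List.range'_succ]
  simp [seg]

lemma seg_append {a b c : ℕ} (h1 : a ≤ b) (h2 : b ≤ c) :
    seg x a b ++ seg x b c = seg x a c := by
  have h := List.range'_append (s := a+1) (m := b-a) (n := c-b) (step := 1)
  simp only [one_mul] at h
  rw [show a + 1 + (b - a) = b + 1 by omega] at h
  rw [seg, seg, seg, ← List.map_append, h, show b - a + (c - b) = c - a by omega]

lemma seg_length (a b : ℕ) : (seg x a b).length = b - a := by simp [seg]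

lemma ofFn_eq_seg : (List.ofFn fun i : Fin n => x (i.val + 1)) = seg x 0 n := by
  apply List.ext_getElem
  · simp [seg]
  · intro i h1 h2
    simp [seg, List.getElem_range']
    ring_nf

lemma zc_empty {a b : ℕ} (h : b ≤ a) : zeroCount x (a+1) b = 0 := by
  rw [zeroCount, Finset.Icc_eq_empty (by omega)]
  simp

lemma zc_Ioc (a b : ℕ) : zeroCount x (a+1) b = ((Finset.Ioc a b).filter fun i => x i = false).card := by
  rw [zeroCount, Finset.Icc_add_one_left_eq_Ioc]

lemma zc_split {a b c : ℕ} (h1 : a ≤ b) (h2 : b ≤ c) :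
    zeroCount x (a+1) b + zeroCount x (b+1) c = zeroCount x (a+1) c := by
  rw [zc_Ioc, zc_Ioc, zc_Ioc, ← Finset.Ioc_union_Ioc_eq_Ioc h1 h2, Finset.filter_union,
    Finset.card_union_of_disjoint]
  apply Finset.disjoint_filter_filter
  rw [Finset.disjoint_left]
  intro i hi hi'
  simp only [Finset.mem_Ioc] at hi hi'
  omega

lemma zc_single (a : ℕ) : zeroCount x (a+1) (a+1) = if x (a+1) = false then 1 else 0 := by
  rw [zeroCount, Finset.Icc_self, Finset.filter_singleton]
  split <;> simp

lemma zc_head {a b : ℕ} (h : a < b) :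
    zeroCount x (a+1) b = (if x (a+1) = false then 1 else 0) + zeroCount x (a+2) b := by
  have := zc_split x (show a ≤ a+1 by omega) (show a+1 ≤ b by omega)
  rw [← this, zc_single]

lemma zc_mono_left {a a' : ℕ} (b : ℕ) (h : a ≤ a') : zeroCount x (a'+1) b ≤ zeroCount x (a+1) b := by
  rw [zc_Ioc, zc_Ioc]
  exact Finset.card_le_card (Finset.filter_subset_filter _ (Finset.Ioc_subset_Ioc_left h))

lemma zc_mono_right (a : ℕ) {b b' : ℕ} (h : b ≤ b') : zeroCount x a b ≤ zeroCount x a b' := by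
  exact Finset.card_le_card (Finset.filter_subset_filter _ (Finset.Icc_subset_Icc_right h))

lemma zc_count : ∀ (m a b : ℕ), b - a ≤ m → (seg x a b).count false = zeroCount x (a+1) b := by
  intro m
  induction m with
  | zero => intro a b h; rw [seg_nil x (by omega), zc_empty x (by omega)]; simp
  | succ m ih =>
    intro a b h
    rcases le_or_gt b a with hba | hab
    · rw [seg_nil x hba, zc_empty x hba]; simp
    · rw [seg_cons x hab, zc_head x hab, List.count_cons, ih (a+1) b (by omega)]
      rcases hx : x (a+1) <;> simp [hx, show 1+(a+1) = a+2 from by omega, Nat.add_comm]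

lemma zc_count' (a b : ℕ) : (seg x a b).count false = zeroCount x (a+1) b :=
  zc_count x (b - a) a b le_rfl

lemma repl_count {c a b : ℕ} (h : (List.replicate c false).Sublist (seg x a b)) :
    c ≤ zeroCount x (a+1) b := by
  have := h.count_le false
  simpa [zc_count'] using this

lemma embed {a p b c : ℕ} {rest : List Bool} (h1 : a < p) (h2 : p ≤ b) (h3 : x p = true)
    (h4 : c ≤ zeroCount x (a+1) p) (h5 : rest.Sublist (seg x p b)) :
    (List.replicate c false ++ true :: rest).Sublist (seg x a b) := by
  rw [← seg_append x (show a ≤ p by omega) h2,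
    show List.replicate c false ++ true :: rest = (List.replicate c false ++ [true]) ++ rest by simp]
  apply List.Sublist.append _ h5
  have hsp : seg x a p = seg x a (p-1) ++ seg x (p-1) p :=
    (seg_append x (show a ≤ p - 1 by omega) (by omega)).symm
  have hlast : seg x (p-1) p = [x p] := by
    rw [seg_cons x (show p - 1 < p by omega), show p - 1 + 1 = p by omega, seg_nil x (le_refl _)]
  rw [hsp, hlast, h3]
  apply List.Sublist.append
  · rw [List.replicate_sublist_iff, zc_count']
    have hz : zeroCount x (a+1) (p-1) + zeroCount x (p-1+1) p = zeroCount x (a+1) p :=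
      zc_split x (by omega) (by omega)
    have : zeroCount x (p-1+1) p = 0 := by
      rw [show p - 1 + 1 = p by omega] at hz ⊢
      rcases Nat.eq_zero_or_pos p with h | h
      · omega
      · have := zc_single x (p-1)
        rw [show p - 1 + 1 = p by omega] at this
        rw [this, h3]
        simp
    omega
  · exact List.Sublist.refl _

lemma peel : ∀ (m a : ℕ), n - a ≤ m → ∀ (c : ℕ) (rest : List Bool),
    (List.replicate c false ++ true :: rest).Sublist (seg x a n) →
    ∃ p, a < p ∧ p ≤ n ∧ x p = true ∧ c ≤ zeroCount x (a+1) p ∧ rest.Sublist (seg x p n) := by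
  intro m
  induction m with
  | zero =>
    intro a h c rest hsub
    rw [seg_nil x (by omega)] at hsub
    have := List.sublist_nil.mp hsub
    simp at this
  | succ m ih =>
    intro a h c rest hsub
    rcases le_or_gt n a with hna | han
    · rw [seg_nil x hna] at hsub
      have := List.sublist_nil.mp hsub
      simp at this
    · rw [seg_cons x han] at hsub
      rcases List.sublist_cons_iff.mp hsub with hskip | ⟨r, hr, hrsub⟩
      · obtain ⟨p, hp1, hp2, hp3, hp4, hp5⟩ := ih (a+1) (by omega) c rest hskip
        exact ⟨p, by omega, hp2, hp3, le_trans hp4 (zc_mono_left x p (by omega)), hp5⟩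
      · cases c with
        | zero =>
          simp only [List.replicate, List.nil_append, List.cons.injEq] at hr
          refine ⟨a+1, by omega, by omega, hr.1.symm, by omega, ?_⟩
          rw [hr.2]; exact hrsub
        | succ c' =>
          rw [List.replicate_succ, List.cons_append, List.cons.injEq] at hr
          obtain ⟨p, hp1, hp2, hp3, hp4, hp5⟩ := ih (a+1) (by omega) c' rest (hr.2 ▸ hrsub)
          refine ⟨p, by omega, hp2, hp3, ?_, hp5⟩
          have hif : (if x (a+1) = false then 1 else 0) = 1 := by rw [← hr.1]; simp
          rw [zc_head x (show a < p by omega), hif]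
          have : a + 1 + 1 = a + 2 := by omega
          rw [this] at hp4
          omega


def ZChain (x y : ℕ → Bool) (n : ℕ) (v : List ℤ) (pF qF : ℕ → ℕ) : Prop :=
  ∀ i : ℕ, ∀ hi : i < v.length,
    StepProp x y n (v.get ⟨i, hi⟩) (pF i) (qF i) (pF (i + 1)) (qF (i + 1))

section Lemmas2
variable (x y : ℕ → Bool) (n : ℕ)

lemma lcs_bdd (L1 L2 : List Bool) :
    BddAbove {k : ℕ | ∃ z : List Bool, z.length = k ∧ z.Sublist L1 ∧ z.Sublist L2} :=
  ⟨L1.length, fun _ ⟨_, hz, h1, _⟩ => hz ▸ h1.length_le⟩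

lemma le_lcsLen {L1 L2 : List Bool} {z : List Bool} (h1 : z.Sublist L1) (h2 : z.Sublist L2) :
    z.length ≤ lcsLen L1 L2 :=
  le_csSup (lcs_bdd L1 L2) ⟨z, rfl, h1, h2⟩

lemma lcsLen_spec (L1 L2 : List Bool) :
    ∃ z : List Bool, z.length = lcsLen L1 L2 ∧ z.Sublist L1 ∧ z.Sublist L2 :=
 by
  apply Nat.sSup_mem _ (lcs_bdd L1 L2)
  refine ⟨0, ?_⟩
  simp only [Set.mem_setOf_eq]
  exact ⟨[], rfl, List.nil_sublist _, List.nil_sublist _⟩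

lemma chain_word_aux {v : List ℤ} {pF qF : ℕ → ℕ} (h0 : pF 0 = 0) (h0' : qF 0 = 0)
    (hch : ZChain x y n v pF qF) :
    ∀ k, k ≤ v.length → pF k ≤ n ∧ qF k ≤ n ∧ ∃ w : List Bool,
      w.length = k + ∑ i ∈ Finset.range k,
        min (zeroCount x (pF i + 1) (pF (i+1))) (zeroCount y (qF i + 1) (qF (i+1))) ∧
      w.Sublist (seg x 0 (pF k)) ∧ w.Sublist (seg y 0 (qF k)) := by
  intro k
  induction k with
  | zero =>
    intro _
    refine ⟨?_, ?_, [], by simp, List.nil_sublist _, List.nil_sublist _⟩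
    · rw [h0]; exact Nat.zero_le n
    · rw [h0']; exact Nat.zero_le n
  | succ k ih =>
    intro hk
    obtain ⟨hpn, hqn, w, hwlen, hwx, hwy⟩ := ih (by omega)
    obtain ⟨hps, hqs, hsn, htn, hxs, hys, _⟩ := hch k (by omega)
    refine ⟨hsn, htn, w ++ (List.replicate
      (min (zeroCount x (pF k + 1) (pF (k+1))) (zeroCount y (qF k + 1) (qF (k+1)))) false
      ++ true :: []), ?_, ?_, ?_⟩
    · simp only [List.length_append, hwlen, List.length_replicate, List.length_cons,
        List.length_nil, Finset.sum_range_succ]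
      omega
    · rw [← seg_append x (Nat.zero_le _) (le_of_lt hps)]
      exact hwx.append (embed x hps le_rfl hxs (min_le_left _ _) (List.nil_sublist _))
    · rw [← seg_append y (Nat.zero_le _) (le_of_lt hqs)]
      exact hwy.append (embed y hqs le_rfl hys (min_le_right _ _) (List.nil_sublist _))

lemma chain_score_le {v : List ℤ} {pF qF : ℕ → ℕ} (h0 : pF 0 = 0) (h0' : qF 0 = 0)
    (hch : ZChain x y n v pF qF) :
    score x y n v pF qF ≤ lcsN x y n := by
  obtain ⟨hpn, hqn, w, hwlen, hwx, hwy⟩ := chain_word_aux x y n h0 h0' hch v.length le_rfl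
  set r := min (zeroCount x (pF v.length + 1) n) (zeroCount y (qF v.length + 1) n) with hr
  have hsubx : (w ++ List.replicate r false).Sublist (seg x 0 n) := by
    rw [← seg_append x (Nat.zero_le _) hpn]
    exact hwx.append (by
      rw [List.replicate_sublist_iff, zc_count']
      exact min_le_left _ _)
  have hsuby : (w ++ List.replicate r false).Sublist (seg y 0 n) := by
    rw [← seg_append y (Nat.zero_le _) hqn]
    exact hwy.append (by
      rw [List.replicate_sublist_iff, zc_count']
      exact min_le_right _ _)
  have hlen : (w ++ List.replicate r false).length = score x y n v pF qF := by
    simp [hwlen, score, hr]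
  rw [lcsN, ofFn_eq_seg, ofFn_eq_seg, ← hlen]
  exact le_lcsLen hsubx hsuby

lemma first_true : ∀ (z : List Bool), true ∈ z →
    ∃ c z', z = List.replicate c false ++ true :: z' := by
  intro z
  induction z with
  | nil => intro h; simp at h
  | cons hd tl ih =>
    intro h
    cases hd with
    | true => exact ⟨0, tl, rfl⟩
    | false =>
      have : true ∈ tl := by simpa using h
      obtain ⟨c, z', hz⟩ := ih this
      exact ⟨c+1, z', by rw [List.replicate_succ, List.cons_append, hz]⟩

lemma exists_chain : ∀ (N : ℕ) (z : List Bool), z.length ≤ N → ∀ a b : ℕ,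
    z.Sublist (seg x a n) → z.Sublist (seg y b n) →
    ∃ (v : List ℤ) (pF qF : ℕ → ℕ), pF 0 = a ∧ qF 0 = b ∧ ZChain x y n v pF qF ∧
      z.length ≤ score x y n v pF qF := by
  intro N
  induction N with
  | zero =>
    intro z hz a b _ _
    refine ⟨[], fun _ => a, fun _ => b, rfl, rfl, fun i hi => absurd hi (by simp), ?_⟩
    omega
  | succ N ih =>
    intro z hz a b hzx hzy
    by_cases htr : true ∈ z
    · obtain ⟨c, z', hzeq⟩ := first_true z htr
      rw [hzeq] at hzx hzy
      obtain ⟨p, hp1, hp2, hp3, hp4, hp5⟩ := peel x n n a (by omega) c z' hzx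
      obtain ⟨q, hq1, hq2, hq3, hq4, hq5⟩ := peel y n n b (by omega) c z' hzy
      have hz'len : z'.length ≤ N := by
        rw [hzeq] at hz; simp at hz; omega
      obtain ⟨v', pF', qF', hbp, hbq, hch', hsc'⟩ := ih z' hz'len p q hp5 hq5
      refine ⟨((zeroCount x (a+1) p : ℤ) - (zeroCount y (b+1) q : ℤ)) :: v',
        (fun i => match i with | 0 => a | (j+1) => pF' j),
        (fun i => match i with | 0 => b | (j+1) => qF' j), rfl, rfl, ?_, ?_⟩
      · intro i hi
        cases i with
        | zero =>
          show StepProp x y n _ a b (pF' 0) (qF' 0)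
          rw [hbp, hbq]
          exact ⟨hp1, hq1, hp2, hq2, hp3, hq3, rfl⟩
        | succ j =>
          exact hch' j (by simpa using hi)
      · have hlen : z.length = c + 1 + z'.length := by rw [hzeq]; simp; omega
        have hs : score x y n (((zeroCount x (a+1) p : ℤ) - (zeroCount y (b+1) q : ℤ)) :: v')
            (fun i => match i with | 0 => a | (j+1) => pF' j)
            (fun i => match i with | 0 => b | (j+1) => qF' j)
            = (v'.length + 1) +
              ((∑ i ∈ Finset.range v'.length,
                min (zeroCount x (pF' i + 1) (pF' (i+1))) (zeroCount y (qF' i + 1) (qF' (i+1)))) +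
               min (zeroCount x (a + 1) (pF' 0)) (zeroCount y (b + 1) (qF' 0))) +
              min (zeroCount x (pF' v'.length + 1) n) (zeroCount y (qF' v'.length + 1) n) := by
          rw [score]
          simp only [List.length_cons, Finset.sum_range_succ']
        rw [hs, hbp, hbq]
        have : z'.length ≤ score x y n v' pF' qF' := hsc'
        rw [score] at this
        omega
    · have hall : ∀ bb ∈ z, bb = false := by
        intro bb hb
        cases bb
        · rfl
        · exact absurd hb htr
      have hzrep : z = List.replicate z.length false := by
        rw [List.eq_replicate_iff]; exact ⟨rfl, hall⟩
      refine ⟨[], fun _ => a, fun _ => b, rfl, rfl, fun i hi => absurd hi (by simp), ?_⟩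
      rw [score]
      simp only [List.length_nil, Finset.range_zero, Finset.sum_empty, Nat.zero_add, Nat.add_zero]
      rw [hzrep] at hzx hzy
      exact le_min (repl_count x hzx) (repl_count y hzy)

end Lemmas2

section Greedy
variable (x y : ℕ → Bool) (n : ℕ)

lemma zc_prefix {p s : ℕ} (h : p ≤ s) :
    zeroCount x 1 p + zeroCount x (p+1) s = zeroCount x 1 s := by
  simpa using zc_split x (Nat.zero_le p) h

lemma step_shift {u : ℤ} {p q p' q' s t : ℕ} (hp : p ≤ p') (hq : q ≤ q')
    (hD : (zeroCount x 1 p : ℤ) - zeroCount y 1 q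
      = (zeroCount x 1 p' : ℤ) - zeroCount y 1 q')
    (h : StepProp x y n u p' q' s t) : StepProp x y n u p q s t := by
  obtain ⟨h1, h2, h3, h4, h5, h6, h7⟩ := h
  refine ⟨by omega, by omega, h3, h4, h5, h6, ?_⟩
  have e1 := zc_prefix x (show p ≤ s by omega)
  have e2 := zc_prefix x (show p' ≤ s by omega)
  have f1 := zc_prefix y (show q ≤ t by omega)
  have f2 := zc_prefix y (show q' ≤ t by omega)
  omega

def greedy (v : List ℤ) : ℕ → ℕ × ℕ
  | 0 => (0, 0)
  | (i+1) =>
    let pq := greedy v i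
    if h : ∃ s, ∃ t, StepProp x y n (v.getD i 0) pq.1 pq.2 s t then
      (Nat.find h, Nat.find (Nat.find_spec h))
    else pq

lemma greedy_inv {v : List ℤ} {pF qF : ℕ → ℕ} (h0 : pF 0 = 0) (h0' : qF 0 = 0)
    (hch : ZChain x y n v pF qF) :
    ∀ i, i ≤ v.length →
      (greedy x y n v i).1 ≤ pF i ∧ (greedy x y n v i).2 ≤ qF i ∧
      ((zeroCount x 1 (greedy x y n v i).1 : ℤ) - zeroCount y 1 (greedy x y n v i).2
        = (zeroCount x 1 (pF i) : ℤ) - zeroCount y 1 (qF i)) := by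
  intro i
  induction i with
  | zero => intro _; rw [h0, h0']; exact ⟨le_rfl, le_rfl, rfl⟩
  | succ i ih =>
    intro hi
    obtain ⟨ha, hb, hD⟩ := ih (by omega)
    have hilen : i < v.length := by omega
    have hgd : v.getD i 0 = v.get ⟨i, hilen⟩ := by
      rw [List.getD_eq_getElem v 0 hilen]; rfl
    have hstep : StepProp x y n (v.getD i 0) (pF i) (qF i) (pF (i+1)) (qF (i+1)) := by
      rw [hgd]; exact hch i hilen
    have hstep' : StepProp x y n (v.getD i 0) (greedy x y n v i).1 (greedy x y n v i).2
        (pF (i+1)) (qF (i+1)) := step_shift x y n ha hb hD hstep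
    have hex : ∃ s, ∃ t, StepProp x y n (v.getD i 0) (greedy x y n v i).1
        (greedy x y n v i).2 s t := ⟨_, _, hstep'⟩
    have hg : greedy x y n v (i+1) = (Nat.find hex, Nat.find (Nat.find_spec hex)) := by
      rw [greedy, dif_pos hex]
    set s0 := Nat.find hex with hs0
    have hspec : ∃ t, StepProp x y n (v.getD i 0) (greedy x y n v i).1
        (greedy x y n v i).2 s0 t := Nat.find_spec hex
    set t0 := Nat.find hspec with ht0
    have hspec2 : StepProp x y n (v.getD i 0) (greedy x y n v i).1
        (greedy x y n v i).2 s0 t0 := Nat.find_spec hspec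
    have hsle : s0 ≤ pF (i+1) := Nat.find_min' hex ⟨qF (i+1), hstep'⟩
    have htle : t0 ≤ qF (i+1) := by
      by_contra hcon
      push_neg at hcon
      obtain ⟨a1, a2, a3, a4, a5, a6, a7⟩ := hspec2
      obtain ⟨b1, b2, b3, b4, b5, b6, b7⟩ := hstep'
      have c1 : zeroCount x ((greedy x y n v i).1 + 1) s0
          ≤ zeroCount x ((greedy x y n v i).1 + 1) (pF (i+1)) := zc_mono_right x _ hsle
      have c2 : zeroCount y ((greedy x y n v i).2 + 1) (qF (i+1))
          ≤ zeroCount y ((greedy x y n v i).2 + 1) t0 := zc_mono_right y _ (le_of_lt hcon)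
      have ceq : zeroCount y ((greedy x y n v i).2 + 1) (qF (i+1))
          = zeroCount y ((greedy x y n v i).2 + 1) t0 := by omega
      have hq : StepProp x y n (v.getD i 0) (greedy x y n v i).1 (greedy x y n v i).2
          s0 (qF (i+1)) := ⟨a1, b2, a3, b4, a5, b6, by omega⟩
      exact absurd hq (Nat.find_min hspec hcon)
    have hfst : (greedy x y n v (i+1)).1 = s0 := by rw [hg]
    have hsnd : (greedy x y n v (i+1)).2 = t0 := by rw [hg]
    refine ⟨hfst ▸ hsle, hsnd ▸ htle, ?_⟩
    rw [hfst, hsnd]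
    obtain ⟨a1, a2, _, _, _, _, a7⟩ := hspec2
    obtain ⟨b1, b2, _, _, _, _, b7⟩ := hstep'
    have e1 := zc_prefix x (show (greedy x y n v i).1 ≤ s0 by omega)
    have e2 := zc_prefix x (show (greedy x y n v i).1 ≤ pF (i+1) by omega)
    have f1 := zc_prefix y (show (greedy x y n v i).2 ≤ t0 by omega)
    have f2 := zc_prefix y (show (greedy x y n v i).2 ≤ qF (i+1) by omega)
    omega

lemma greedy_alignment {v : List ℤ} {pF qF : ℕ → ℕ} (h0 : pF 0 = 0) (h0' : qF 0 = 0)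
    (hch : ZChain x y n v pF qF) :
    IsAlignment x y n v (fun i => (greedy x y n v i).1) (fun i => (greedy x y n v i).2) := by
  refine ⟨rfl, rfl, ?_⟩
  intro i hi
  obtain ⟨ha, hb, hD⟩ := greedy_inv x y n h0 h0' hch i (le_of_lt hi)
  have hgd : v.getD i 0 = v.get ⟨i, hi⟩ := by
    rw [List.getD_eq_getElem v 0 hi]; rfl
  have hstep : StepProp x y n (v.getD i 0) (pF i) (qF i) (pF (i+1)) (qF (i+1)) := by
    rw [hgd]; exact hch i hi
  have hstep' : StepProp x y n (v.getD i 0) (greedy x y n v i).1 (greedy x y n v i).2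
      (pF (i+1)) (qF (i+1)) := step_shift x y n ha hb hD hstep
  have hex : ∃ s, ∃ t, StepProp x y n (v.getD i 0) (greedy x y n v i).1
      (greedy x y n v i).2 s t := ⟨_, _, hstep'⟩
  have hg : greedy x y n v (i+1) = (Nat.find hex, Nat.find (Nat.find_spec hex)) := by
    rw [greedy, dif_pos hex]
  constructor
  · show StepProp x y n _ _ _ (greedy x y n v (i+1)).1 (greedy x y n v (i+1)).2
    rw [hg, ← hgd]
    exact Nat.find_spec (Nat.find_spec hex)
  · intro s t hst
    rw [← hgd] at hst
    show (greedy x y n v (i+1)).1 < s ∨ ((greedy x y n v (i+1)).1 = s ∧ (greedy x y n v (i+1)).2 ≤ t)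
    rw [hg]
    simp only
    have hsle : Nat.find hex ≤ s := Nat.find_min' hex ⟨t, hst⟩
    rcases lt_or_eq_of_le hsle with hlt | heq
    · exact Or.inl hlt
    · refine Or.inr ⟨heq, Nat.find_min' (Nat.find_spec hex) ?_⟩
      rw [heq]
      exact hst

end Greedy

section Final
variable (x y : ℕ → Bool) (n : ℕ)

lemma greedy_score_ge {v : List ℤ} {pF qF : ℕ → ℕ} (h0 : pF 0 = 0) (h0' : qF 0 = 0)
    (hch : ZChain x y n v pF qF) :
    score x y n v pF qF ≤
      score x y n v (fun i => (greedy x y n v i).1) (fun i => (greedy x y n v i).2) := by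
  have halign := greedy_alignment x y n h0 h0' hch
  have key : ∀ d j, j + d = v.length →
      (∑ i ∈ Finset.Ico j v.length,
        min (zeroCount x ((greedy x y n v i).1 + 1) ((greedy x y n v (i+1)).1))
            (zeroCount y ((greedy x y n v i).2 + 1) ((greedy x y n v (i+1)).2)))
        + min (zeroCount x ((greedy x y n v v.length).1 + 1) n)
              (zeroCount y ((greedy x y n v v.length).2 + 1) n)
      = (∑ i ∈ Finset.Ico j v.length,
          min (zeroCount x (pF i + 1) (pF (i+1))) (zeroCount y (qF i + 1) (qF (i+1))))
        + min (zeroCount x (pF v.length + 1) n) (zeroCount y (qF v.length + 1) n)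
        + (zeroCount x 1 (pF j) - zeroCount x 1 ((greedy x y n v j).1)) := by
    intro d
    induction d with
    | zero =>
      intro j hj
      have hj' : j = v.length := by omega
      rw [hj']
      simp only [Finset.Ico_self, Finset.sum_empty, Nat.zero_add]
      obtain ⟨hpn, hqn, -⟩ := chain_word_aux x y n h0 h0' hch v.length le_rfl
      obtain ⟨ha, hb, hD⟩ := greedy_inv x y n h0 h0' hch v.length le_rfl
      have e1 := zc_prefix x (show (greedy x y n v v.length).1 ≤ n by omega)
      have e2 := zc_prefix x (show pF v.length ≤ n by omega)
      have f1 := zc_prefix y (show (greedy x y n v v.length).2 ≤ n by omega)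
      have f2 := zc_prefix y (show qF v.length ≤ n by omega)
      have m1 : zeroCount x 1 ((greedy x y n v v.length).1) ≤ zeroCount x 1 (pF v.length) :=
        zc_mono_right x 1 ha
      have m2 : zeroCount y 1 ((greedy x y n v v.length).2) ≤ zeroCount y 1 (qF v.length) :=
        zc_mono_right y 1 hb
      omega
    | succ d ih =>
      intro j hj
      have hjlt : j < v.length := by omega
      rw [Finset.sum_eq_sum_Ico_succ_bot hjlt
          (fun i => min (zeroCount x ((greedy x y n v i).1 + 1) ((greedy x y n v (i+1)).1))
            (zeroCount y ((greedy x y n v i).2 + 1) ((greedy x y n v (i+1)).2))),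
        Finset.sum_eq_sum_Ico_succ_bot hjlt
          (fun i => min (zeroCount x (pF i + 1) (pF (i+1))) (zeroCount y (qF i + 1) (qF (i+1))))]
      have hkey := ih (j+1) (by omega)
      obtain ⟨hc1, hc2, hc3, hc4, -⟩ := hch j hjlt
      have hgstep : StepProp x y n (v.get ⟨j, hjlt⟩) ((greedy x y n v j).1)
          ((greedy x y n v j).2) ((greedy x y n v (j+1)).1) ((greedy x y n v (j+1)).2) :=
        (halign.2.2 j hjlt).1
      obtain ⟨hg1, hg2, hg3, hg4, -⟩ := hgstep
      obtain ⟨ha, hb, hD⟩ := greedy_inv x y n h0 h0' hch j (by omega)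
      obtain ⟨ha', hb', hD'⟩ := greedy_inv x y n h0 h0' hch (j+1) (by omega)
      have e1 := zc_prefix x (show (greedy x y n v j).1 ≤ (greedy x y n v (j+1)).1 by omega)
      have e2 := zc_prefix x (show pF j ≤ pF (j+1) by omega)
      have f1 := zc_prefix y (show (greedy x y n v j).2 ≤ (greedy x y n v (j+1)).2 by omega)
      have f2 := zc_prefix y (show qF j ≤ qF (j+1) by omega)
      have m1 : zeroCount x 1 ((greedy x y n v j).1) ≤ zeroCount x 1 (pF j) :=
        zc_mono_right x 1 ha
      have m2 : zeroCount y 1 ((greedy x y n v j).2) ≤ zeroCount y 1 (qF j) :=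
        zc_mono_right y 1 hb
      have m1' : zeroCount x 1 ((greedy x y n v (j+1)).1) ≤ zeroCount x 1 (pF (j+1)) :=
        zc_mono_right x 1 ha'
      have m2' : zeroCount y 1 ((greedy x y n v (j+1)).2) ≤ zeroCount y 1 (qF (j+1)) :=
        zc_mono_right y 1 hb'
      omega
  have hkey := key v.length 0 (by omega)
  have hg0 : (greedy x y n v 0).1 = 0 := rfl
  rw [h0, hg0] at hkey
  simp only [score, Finset.range_eq_Ico]
  omega


/-- Proposition 4.1: the LCS length of X and Y is the maximum, over admissible vectors v,
of the score of the alignment associated with v. -/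
theorem stmt7 (n : ℕ) (x y : ℕ → Bool) :
    IsGreatest
      {m : ℕ | ∃ (v : List ℤ) (piF nuF : ℕ → ℕ),
        IsAlignment x y n v piF nuF ∧ m = score x y n v piF nuF}
      (lcsN x y n) := by
  constructor
  · obtain ⟨z, hzlen, hzx, hzy⟩ :=
      lcsLen_spec (List.ofFn fun i : Fin n => x (i.val + 1))
        (List.ofFn fun i : Fin n => y (i.val + 1))
    rw [ofFn_eq_seg] at hzx
    rw [ofFn_eq_seg] at hzy
    obtain ⟨v, pF, qF, h0, h0', hch, hsc⟩ := exists_chain x y n z.length z le_rfl 0 0 hzx hzy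
    have halign := greedy_alignment x y n h0 h0' hch
    have hlcs : z.length = lcsN x y n := hzlen
    have hchg : ZChain x y n v (fun i => (greedy x y n v i).1) (fun i => (greedy x y n v i).2) :=
      fun i hi => (halign.2.2 i hi).1
    have h2 : score x y n v (fun i => (greedy x y n v i).1) (fun i => (greedy x y n v i).2)
        ≤ lcsN x y n := chain_score_le x y n rfl rfl hchg
    have h3 := greedy_score_ge x y n h0 h0' hch
    exact ⟨v, _, _, halign, by omega⟩
  · rintro m ⟨v, pF, qF, hal, rfl⟩
    exact chain_score_le x y n hal.1 hal.2.1 (fun i hi => (hal.2.2 i hi).1)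
end Final
end Lemmas
end
end

section
/- Let X, Y ∈ {0,1}^n, let N₀ be the total number of zeros in X and Y together, let L be the LCS length of X and Y, and suppose L ≥ N₀/2 + a for some real a > 0. Then every optimal alignment v = (v_1,…,v_k) ∈ V satisfies k ≥ a and |v_1| + ⋯ + |v_k| ≤ 2k. -/
open scoped BigOperators
open Classical

noncomputable section

lemma zc_add (x : ℕ → Bool) (a b c : ℕ) (h1 : a ≤ b + 1) (h2 : b ≤ c) :
    zeroCount x a b + zeroCount x (b + 1) c = zeroCount x a c := by
  unfold zeroCount
  rw [← Finset.card_union_of_disjoint, ← Finset.filter_union]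
  · congr 2
    ext i
    simp only [Finset.mem_union, Finset.mem_Icc]
    omega
  · simp only [Finset.disjoint_left, Finset.mem_filter, Finset.mem_Icc]
    rintro i ⟨⟨_, hib⟩, _⟩ ⟨⟨hbi, _⟩, _⟩; omega

lemma mono_p (p : ℕ → ℕ) (k : ℕ) (h : ∀ i < k, p i < p (i + 1)) : p 0 ≤ p k := by
  induction k with
  | zero => exact le_refl _
  | succ k ih =>
    have h1 := h k (by omega)
    have h2 := ih (fun i hi => h i (by omega))
    omega

lemma sum_zc (x : ℕ → Bool) (p : ℕ → ℕ) (k : ℕ) (h : ∀ i < k, p i < p (i + 1)) :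
    ∑ i ∈ Finset.range k, zeroCount x (p i + 1) (p (i + 1)) = zeroCount x (p 0 + 1) (p k) := by
  induction k with
  | zero =>
    simp [zeroCount, Finset.Icc_eq_empty (by omega : ¬ p 0 + 1 ≤ p 0)]
  | succ k ih =>
    rw [Finset.sum_range_succ, ih (fun i hi => h i (by omega)),
      zc_add x (p 0 + 1) (p k) (p (k + 1))
        (by have := mono_p p k (fun i hi => h i (by omega)); omega)
        (le_of_lt (h k (by omega)))]

lemma stmt8_aux (n : ℕ) (x y : ℕ → Bool) (a : ℝ) (ha : 0 < a) (L : ℕ)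
    (hL : ((zeroCount x 1 n + zeroCount y 1 n : ℕ) : ℝ) / 2 + a ≤ (L : ℝ))
    (v : List ℤ) (piF nuF : ℕ → ℕ) (hv : IsAlignment x y n v piF nuF)
    (hopt : score x y n v piF nuF = L) :
    a ≤ (v.length : ℝ) ∧ (v.map Int.natAbs).sum ≤ 2 * v.length := by
  obtain ⟨hp0, hq0, hstep⟩ := hv
  set k := v.length with hk
  have hpstep : ∀ i < k, piF i < piF (i + 1) := fun i hi => ((hstep i hi).1).1
  have hqstep : ∀ i < k, nuF i < nuF (i + 1) := fun i hi => ((hstep i hi).1).2.1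
  have hpkn : piF k ≤ n := by
    rcases Nat.eq_zero_or_pos k with h0 | h1
    · rw [h0, hp0]; exact Nat.zero_le n
    · have h := ((hstep (k - 1) (by omega)).1).2.2.1
      have e : k - 1 + 1 = k := by omega
      rwa [e] at h
  have hqkn : nuF k ≤ n := by
    rcases Nat.eq_zero_or_pos k with h0 | h1
    · rw [h0, hq0]; exact Nat.zero_le n
    · have h := ((hstep (k - 1) (by omega)).1).2.2.2.1
      have e : k - 1 + 1 = k := by omega
      rwa [e] at h
  have hSx : (∑ i ∈ Finset.range k, zeroCount x (piF i + 1) (piF (i + 1)))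
      + zeroCount x (piF k + 1) n = zeroCount x 1 n := by
    rw [sum_zc x piF k hpstep, hp0]
    exact zc_add x (0 + 1) (piF k) n (by omega) hpkn
  have hSy : (∑ i ∈ Finset.range k, zeroCount y (nuF i + 1) (nuF (i + 1)))
      + zeroCount y (nuF k + 1) n = zeroCount y 1 n := by
    rw [sum_zc y nuF k hqstep, hq0]
    exact zc_add y (0 + 1) (nuF k) n (by omega) hqkn
  have hAsum : (v.map Int.natAbs).sum
      = ∑ i : Fin k, (v.get ⟨i.1, i.2⟩).natAbs := by
    conv_lhs => rw [← List.ofFn_get v]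
    rw [List.map_ofFn, List.sum_ofFn]
    rfl
  have hA2 : (v.map Int.natAbs).sum
      + 2 * (∑ i ∈ Finset.range k,
        min (zeroCount x (piF i + 1) (piF (i + 1))) (zeroCount y (nuF i + 1) (nuF (i + 1))))
      = (∑ i ∈ Finset.range k, zeroCount x (piF i + 1) (piF (i + 1)))
        + (∑ i ∈ Finset.range k, zeroCount y (nuF i + 1) (nuF (i + 1))) := by
    rw [hAsum, ← Fin.sum_univ_eq_sum_range
      (fun i => min (zeroCount x (piF i + 1) (piF (i + 1))) (zeroCount y (nuF i + 1) (nuF (i + 1)))),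
      ← Fin.sum_univ_eq_sum_range (fun i => zeroCount x (piF i + 1) (piF (i + 1))),
      ← Fin.sum_univ_eq_sum_range (fun i => zeroCount y (nuF i + 1) (nuF (i + 1))),
      Finset.mul_sum, ← Finset.sum_add_distrib, ← Finset.sum_add_distrib]
    refine Finset.sum_congr rfl fun i _ => ?_
    have h := ((hstep i.1 i.2).1).2.2.2.2.2.2
    omega
  have hscore : k + (∑ i ∈ Finset.range k,
        min (zeroCount x (piF i + 1) (piF (i + 1))) (zeroCount y (nuF i + 1) (nuF (i + 1))))
      + min (zeroCount x (piF k + 1) n) (zeroCount y (nuF k + 1) n) = L := hopt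
  have hmin2 : 2 * (∑ i ∈ Finset.range k,
        min (zeroCount x (piF i + 1) (piF (i + 1))) (zeroCount y (nuF i + 1) (nuF (i + 1))))
      ≤ (∑ i ∈ Finset.range k, zeroCount x (piF i + 1) (piF (i + 1)))
        + (∑ i ∈ Finset.range k, zeroCount y (nuF i + 1) (nuF (i + 1))) := by omega
  have h2L : 2 * L ≤ 2 * k + (zeroCount x 1 n + zeroCount y 1 n) := by omega
  constructor
  · have : (2 * L : ℝ) ≤ 2 * k + ((zeroCount x 1 n + zeroCount y 1 n : ℕ) : ℝ) := by
      exact_mod_cast h2L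
    push_cast at this hL ⊢
    linarith
  · have hlt : zeroCount x 1 n + zeroCount y 1 n < 2 * L := by
      have : ((zeroCount x 1 n + zeroCount y 1 n : ℕ) : ℝ) < ((2 * L : ℕ) : ℝ) := by
        push_cast at hL ⊢; linarith
      exact_mod_cast this
    omega

/-- If L ≥ N₀/2 + a with a > 0, where N₀ is the total number of zeros in X and Y, then every
optimal alignment v = (v₁,…,v_k) satisfies k ≥ a and |v₁| + ⋯ + |v_k| ≤ 2k. -/
theorem stmt8 (n : ℕ) (x y : ℕ → Bool) (a : ℝ) (ha : 0 < a)
    (hL : ((zeroCount x 1 n + zeroCount y 1 n : ℕ) : ℝ) / 2 + a ≤ (lcsN x y n : ℝ))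
    (v : List ℤ) (piF nuF : ℕ → ℕ) (hv : IsAlignment x y n v piF nuF)
    (hopt : score x y n v piF nuF = lcsN x y n) :
    a ≤ (v.length : ℝ) ∧ (v.map Int.natAbs).sum ≤ 2 * v.length :=
  stmt8_aux n x y a ha (lcsN x y n) hL v piF nuF hv hopt
end
end

section
/- For every k ≥ 1 divisible by 100, the number of vectors v = (v_1,…,v_k) ∈ ℤ^k with |v_1| + ⋯ + |v_k| ≤ 2k and with at most 0.01·k nonzero coordinates is at most exp(0.1262·k). -/
open scoped BigOperators
open Classical


lemma card_sum_aux {α β : Type*} (s : Finset α) (f : α → Multiset β) :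
    Multiset.card (∑ i ∈ s, f i) = ∑ i ∈ s, Multiset.card (f i) := by
  induction s using Finset.cons_induction with
  | empty => simp
  | cons a s ha ih => simp [Finset.sum_cons, ih]

lemma auxM (m N : ℕ) :
    Nat.card {g : Fin m → ℤ // (∑ i, (g i).natAbs) ≤ N} ≤ 2 ^ m * (N + m).choose m := by
  classical
  have hcount : ∀ (a : Fin m → ℕ) (i : Fin m),
      Multiset.count i.castSucc
        ((∑ j : Fin m, Multiset.replicate (a j) (Fin.castSucc j)) +
          Multiset.replicate (N - ∑ j, a j) (Fin.last m)) = a i := by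
    intro a i
    rw [Multiset.count_add, Multiset.count_replicate,
      if_neg (by exact fun h => (Fin.castSucc_lt_last i).ne' h)]
    rw [← Multiset.coe_countAddMonoidHom, map_sum]
    simp only [Multiset.coe_countAddMonoidHom, Multiset.count_replicate, Fin.castSucc_inj]
    rw [Finset.sum_ite_eq' Finset.univ i a]
    simp
  set F : {g : Fin m → ℤ // (∑ i, (g i).natAbs) ≤ N} →
      (Fin m → Bool) × Sym (Fin (m + 1)) N := fun g =>
    (fun i => decide (g.1 i < 0),
      ⟨(∑ j : Fin m, Multiset.replicate ((g.1 j).natAbs) (Fin.castSucc j)) +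
          Multiset.replicate (N - ∑ j, (g.1 j).natAbs) (Fin.last m), by
        simp only [Multiset.card_add, Multiset.card_replicate]
        rw [card_sum_aux]
        simp only [Multiset.card_replicate]
        omega⟩) with hF
  have hFinj : Function.Injective F := by
    intro g h hgh
    have h1 : ∀ i, decide (g.1 i < 0) = decide (h.1 i < 0) := fun i =>
      congrFun (congrArg Prod.fst hgh) i
    have h2 : ∀ i : Fin m, (g.1 i).natAbs = (h.1 i).natAbs := by
      intro i
      have := congrArg (fun s : Sym (Fin (m+1)) N => Multiset.count i.castSucc s.1)
        (congrArg Prod.snd hgh)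
      simpa only [hF, hcount] using this
    ext i
    have hb := h1 i
    rw [decide_eq_decide] at hb
    have := h2 i
    omega
  calc Nat.card {g : Fin m → ℤ // (∑ i, (g i).natAbs) ≤ N}
      ≤ Nat.card ((Fin m → Bool) × Sym (Fin (m + 1)) N) :=
        Nat.card_le_card_of_injective F hFinj
    _ = 2 ^ m * (N + m).choose m := by
        rw [Nat.card_eq_fintype_card, Fintype.card_prod, Fintype.card_fun]
        congr 1
        · simp
        · rw [Sym.card_sym_eq_choose, Fintype.card_fin]
          rw [Nat.add_comm N m]
          have : m + 1 + N - 1 = m + N := by omega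
          rw [this, ← Nat.choose_symm (by omega : N ≤ m + N)]
          congr 1
          omega


lemma finite_ball (m N : ℕ) : Finite {g : Fin m → ℤ // (∑ i, (g i).natAbs) ≤ N} := by
  have : ∀ g : {g : Fin m → ℤ // (∑ i, (g i).natAbs) ≤ N}, ∀ i, g.1 i ∈ Set.Icc (-(N:ℤ)) N := by
    intro g i
    have h1 : (g.1 i).natAbs ≤ N := le_trans (Finset.single_le_sum (f := fun j => (g.1 j).natAbs)
      (fun j _ => Nat.zero_le _) (Finset.mem_univ i)) g.2
    constructor <;> omega
  have : Function.Injective (fun g : {g : Fin m → ℤ // (∑ i, (g i).natAbs) ≤ N} =>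
      (fun i => (⟨g.1 i, this g i⟩ : Set.Icc (-(N:ℤ)) N))) := by
    intro g h hgh
    ext i
    exact congrArg Subtype.val (congrFun hgh i)
  have hfin : Finite (Set.Icc (-(N:ℤ)) N) := (Set.finite_Icc _ _).to_subtype
  exact Finite.of_injective _ this

lemma main_count (k m : ℕ) (hm : m ≤ k) :
    ({v : Fin k → ℤ | (∑ i, (v i).natAbs) ≤ 2 * k ∧
        (Finset.univ.filter fun i => v i ≠ 0).card ≤ m}.ncard : ℕ) ≤
      k.choose m * Nat.card {g : Fin m → ℤ // (∑ i, (g i).natAbs) ≤ 2 * k} := by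
  classical
  set S := {v : Fin k → ℤ | (∑ i, (v i).natAbs) ≤ 2 * k ∧
      (Finset.univ.filter fun i => v i ≠ 0).card ≤ m} with hS
  set D := {A : Finset (Fin k) // A.card = m} ×
      {g : Fin m → ℤ // (∑ i, (g i).natAbs) ≤ 2 * k} with hD
  haveI : Finite {g : Fin m → ℤ // (∑ i, (g i).natAbs) ≤ 2 * k} := finite_ball m (2*k)
  haveI : Finite D := by rw [hD]; infer_instance
  set F : D → (Fin k → ℤ) := fun p => fun i =>
    if h : i ∈ p.1.1 then p.2.1 ((p.1.1.orderIsoOfFin p.1.2).symm ⟨i, h⟩) else 0 with hF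
  have hsub : S ⊆ Set.range F := by
    rintro v ⟨hv1, hv2⟩
    obtain ⟨A, hTA, hA⟩ := Finset.exists_superset_card_eq hv2 (by simpa using hm)
    set e := A.orderIsoOfFin hA with he
    refine ⟨⟨⟨A, hA⟩, ⟨fun j => v (e j), ?_⟩⟩, ?_⟩
    · have h1 : (∑ j : Fin m, (v (e j)).natAbs) = ∑ i ∈ A, (v i).natAbs := by
        rw [← Finset.sum_attach A (fun i => (v i).natAbs)]
        exact Fintype.sum_equiv e.toEquiv _ _ (fun j => rfl)
      rw [h1]
      exact le_trans (Finset.sum_le_sum_of_subset (Finset.subset_univ A)) hv1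
    · funext i
      simp only [hF]
      by_cases h : i ∈ A
      · simp only [dif_pos h]
        congr 1
        exact congrArg Subtype.val (e.apply_symm_apply ⟨i, h⟩)
      · simp only [dif_neg h]
        by_contra hne
        exact h (hTA (Finset.mem_filter.mpr ⟨Finset.mem_univ i, fun hh => hne hh.symm⟩))
  calc S.ncard ≤ (Set.range F).ncard :=
        Set.ncard_le_ncard hsub (Set.finite_range F)
    _ = Nat.card (Set.range F) := (Nat.card_coe_set_eq _).symm
    _ ≤ Nat.card D := Finite.card_range_le F
    _ = k.choose m * Nat.card {g : Fin m → ℤ // (∑ i, (g i).natAbs) ≤ 2 * k} := by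
        rw [hD, Nat.card_prod]
        congr 1
        rw [Nat.card_eq_fintype_card, Fintype.card_finset_len, Fintype.card_fin]


lemma key_exp : (40200 : ℝ) ≤ Real.exp 10.62 := by
  have h10 : (10.62 : ℝ) = 10 + 0.62 := by norm_num
  rw [h10, Real.exp_add]
  have h1 : (2.7182818283 : ℝ) ^ (10:ℕ) ≤ Real.exp 10 := by
    rw [show (10:ℝ) = ((10:ℕ):ℝ) by norm_num, ← Real.exp_one_pow]
    exact pow_le_pow_left₀ (by norm_num) Real.exp_one_gt_d9.le 10
  have h2 : (1.8519 : ℝ) ≤ Real.exp 0.62 := by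
    have := Real.sum_le_exp_of_nonneg (by norm_num : (0:ℝ) ≤ 0.62) 4
    rw [Finset.sum_range_succ, Finset.sum_range_succ, Finset.sum_range_succ,
      Finset.sum_range_succ, Finset.sum_range_zero] at this
    norm_num [Nat.factorial] at this
    linarith
  calc (40200 : ℝ) ≤ 2.7182818283 ^ (10:ℕ) * 1.8519 := by norm_num
    _ ≤ Real.exp 10 * Real.exp 0.62 := by
        apply mul_le_mul h1 h2 (by norm_num)
        positivity

lemma choose_bound (c m : ℕ) :
    ((c * m).choose m : ℝ) ≤ (c : ℝ) ^ m * Real.exp m := by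
  calc ((c * m).choose m : ℝ) ≤ ((c*m : ℕ) : ℝ) ^ m / (m.factorial : ℝ) :=
        Nat.choose_le_pow_div m (c*m)
    _ = (c:ℝ)^m * ((m:ℝ)^m / (m.factorial : ℝ)) := by
        push_cast
        rw [mul_pow]
        ring
    _ ≤ (c:ℝ)^m * Real.exp m := by
        apply mul_le_mul_of_nonneg_left _ (by positivity)
        exact Real.pow_div_factorial_le_exp (x := (m:ℝ)) (Nat.cast_nonneg m) m

lemma numer (m : ℕ) :
    (((100*m).choose m * (2 ^ m * (201 * m).choose m) : ℕ) : ℝ) ≤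
      Real.exp (0.1262 * (100 * m : ℕ)) := by
  have hA := choose_bound 100 m
  have hB := choose_bound 201 m
  have hA0 : (0:ℝ) ≤ ((100*m).choose m : ℝ) := by positivity
  have hB0 : (0:ℝ) ≤ ((201*m).choose m : ℝ) := by positivity
  have step : (((100*m).choose m * (2 ^ m * (201 * m).choose m) : ℕ) : ℝ) ≤
      (100:ℝ)^m * Real.exp m * (2^m * ((201:ℝ)^m * Real.exp m)) := by
    push_cast
    apply mul_le_mul hA _ (by positivity) (by positivity)
    apply mul_le_mul_of_nonneg_left hB (by positivity)
  refine step.trans ?_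
  have hre : (100:ℝ)^m * Real.exp m * (2^m * ((201:ℝ)^m * Real.exp m)) =
      (40200:ℝ)^m * Real.exp (2*m) := by
    rw [show (2:ℝ)*(m:ℝ) = (m:ℝ) + m by ring, Real.exp_add,
      show (40200:ℝ)^m = 100^m*(2^m*201^m) by rw [← mul_pow, ← mul_pow]; norm_num]
    ring
  rw [hre]
  have h1 : (40200:ℝ)^m ≤ Real.exp (10.62 * m) := by
    calc (40200:ℝ)^m ≤ (Real.exp 10.62)^m := pow_le_pow_left₀ (by norm_num) key_exp m
      _ = Real.exp (10.62 * m) := by rw [← Real.exp_nat_mul]; ring_nf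
  calc (40200:ℝ)^m * Real.exp (2*m) ≤ Real.exp (10.62*m) * Real.exp (2*m) :=
        mul_le_mul_of_nonneg_right h1 (Real.exp_pos _).le
    _ = Real.exp (0.1262 * (100 * m : ℕ)) := by
        rw [← Real.exp_add]
        congr 1
        push_cast
        ring

/-- For every k ≥ 1 divisible by 100, the number of vectors v ∈ ℤ^k with
|v₁| + ⋯ + |v_k| ≤ 2k and at most 0.01·k nonzero coordinates is at most exp(0.1262·k). -/
theorem stmt11 (k : ℕ) (hk : 1 ≤ k) (hdiv : 100 ∣ k) :
    ({v : Fin k → ℤ | (∑ i, (v i).natAbs) ≤ 2 * k ∧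
        (Finset.univ.filter fun i => v i ≠ 0).card ≤ k / 100}.ncard : ℝ) ≤
      Real.exp (0.1262 * k) := by
  obtain ⟨m, rfl⟩ := hdiv
  have hm : (100 * m) / 100 = m := Nat.mul_div_cancel_left m (by norm_num)
  rw [hm]
  have hmk : m ≤ 100 * m := Nat.le_mul_of_pos_left m (by norm_num)
  have h1 := main_count (100 * m) m hmk
  have h2 := auxM m (2 * (100 * m))
  have h3 : 2 * (100 * m) + m = 201 * m := by ring
  rw [h3] at h2
  have h4 : ({v : Fin (100 * m) → ℤ | (∑ i, (v i).natAbs) ≤ 2 * (100 * m) ∧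
        (Finset.univ.filter fun i => v i ≠ 0).card ≤ m}.ncard : ℕ) ≤
      (100 * m).choose m * (2 ^ m * (201 * m).choose m) :=
    h1.trans (Nat.mul_le_mul_left _ h2)
  calc ({v : Fin (100 * m) → ℤ | (∑ i, (v i).natAbs) ≤ 2 * (100 * m) ∧
        (Finset.univ.filter fun i => v i ≠ 0).card ≤ m}.ncard : ℝ)
      ≤ (((100 * m).choose m * (2 ^ m * (201 * m).choose m) : ℕ) : ℝ) := by
        exact_mod_cast Nat.cast_le.mpr h4
    _ ≤ Real.exp (0.1262 * (100 * m : ℕ)) := numer m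
end

section
/- Let ε ∈ (0, 1/2] and let (ξ_i)_{i≥1} and (η_i)_{i≥1} be two independent sequences of i.i.d. random variables with P(ξ_1 = j) = P(η_1 = j) = ε^j·(1−ε) for j = 0, 1, 2, …. Define the stopping times T = min{ i ≥ 1 : ξ_i ≥ 1 and η_i ≥ 1 } and U = min{ i ≥ 2 : (ξ_{i−1} ≥ 1, η_{i−1} = 0, ξ_i = 0, η_i ≥ 1) or (ξ_{i−1} = 0, η_{i−1} ≥ 1, ξ_i ≥ 1, η_i = 0) }. Then P(U < T) ≥ 2/9. -/
open MeasureTheory ProbabilityTheory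
open scoped ENNReal

noncomputable section

/-- T = min{ i ≥ 1 : ξ_i ≥ 1 and η_i ≥ 1 } (as an element of ℕ∞, with value ⊤ if no such i). -/
def hitT {Ω : Type*} (ξ η : ℕ → Ω → ℕ) (ω : Ω) : ℕ∞ :=
  sInf {c : ℕ∞ | ∃ i : ℕ, c = (i : ℕ∞) ∧ 1 ≤ i ∧ 1 ≤ ξ i ω ∧ 1 ≤ η i ω}

/-- U = min{ i ≥ 2 : (ξ_{i−1} ≥ 1, η_{i−1} = 0, ξ_i = 0, η_i ≥ 1) or
(ξ_{i−1} = 0, η_{i−1} ≥ 1, ξ_i ≥ 1, η_i = 0) }. -/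
def hitU {Ω : Type*} (ξ η : ℕ → Ω → ℕ) (ω : Ω) : ℕ∞ :=
  sInf {c : ℕ∞ | ∃ i : ℕ, c = (i : ℕ∞) ∧ 2 ≤ i ∧
    ((1 ≤ ξ (i - 1) ω ∧ η (i - 1) ω = 0 ∧ ξ i ω = 0 ∧ 1 ≤ η i ω) ∨
      (ξ (i - 1) ω = 0 ∧ 1 ≤ η (i - 1) ω ∧ 1 ≤ ξ i ω ∧ η i ω = 0))}

namespace Stmt12Aux

/-! ### Letters and words -/

abbrev Ltr := Bool × Bool
abbrev P3 := ℕ × ℕ × Bool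

def nl : Ltr := (false, false)
def al (c : Bool) : Ltr := (c, !c)

lemma al_ne_nl (c : Bool) : al c ≠ nl := by cases c <;> simp [al, nl]
lemma al_inj {b c : Bool} (h : al b = al c) : b = c := by
  cases b <;> cases c <;> simp_all [al]
lemma al_ne_not (c : Bool) : al c ≠ al (!c) := by cases c <;> simp [al]
lemma al_not_ne (c : Bool) : al (!c) ≠ al c := fun h => al_ne_not c h.symm
lemma al_ne_tt (c : Bool) : al c ≠ (true, true) := by cases c <;> simp [al]
lemma nl_ne_tt : nl ≠ (true, true) := by simp [nl]

def blockL (x : P3) : List Ltr :=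
  List.replicate (x.1 + 1) (al x.2.2) ++ List.replicate (x.2.1 + 1) nl

def bodyL : (k : ℕ) → (Fin k → P3) → List Ltr
  | 0, _ => []
  | k+1, f => blockL (f 0) ++ bodyL k (fun t => f t.succ)

/-- the word with the leading `nl`-run removed -/
def Rw (k : ℕ) (f : Fin k → P3) (j : ℕ) (C : Bool) : List Ltr :=
  bodyL k f ++ (List.replicate (j + 1) (al C) ++ [al (!C)])

def wordL (k : ℕ) (f : Fin k → P3) (x : P3) : List Ltr :=
  List.replicate x.1 nl ++ Rw k f x.2.1 x.2.2

lemma getD_rep {m p : ℕ} {a d : Ltr} (h : p < m) : (List.replicate m a).getD p d = a := by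
  rw [List.getD_eq_getElem _ _ (by simpa using h)]
  simp

lemma Rw_zero (f : Fin 0 → P3) (j : ℕ) (C : Bool) :
    Rw 0 f j C = List.replicate (j + 1) (al C) ++ [al (!C)] := by
  rw [Rw, bodyL, List.nil_append]

lemma Rw_succ (k : ℕ) (f : Fin (k + 1) → P3) (j : ℕ) (C : Bool) :
    Rw (k+1) f j C = List.replicate ((f 0).1 + 1) (al (f 0).2.2) ++
      (List.replicate ((f 0).2.1 + 1) nl ++ Rw k (fun t => f t.succ) j C) := by
  rw [Rw, bodyL, blockL, Rw]
  simp [List.append_assoc]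

/-! ### no early win -/

def Good (l : List Ltr) : Prop :=
  ∀ p c, p + 1 < l.length → l.getD p nl = al c → l.getD (p + 1) nl ≠ al (!c)

lemma good_nil : Good [] := by intro p c hp _; simp at hp

lemma good_nl {l : List Ltr} (m : ℕ) (h : Good l) : Good (List.replicate m nl ++ l) := by
  intro p c hp heq
  have hlen : p + 1 < m + l.length := by
    simpa [List.length_append, List.length_replicate] using hp
  by_cases hpm : p < m
  · rw [List.getD_append _ _ _ _ (by simpa using hpm), getD_rep hpm] at heq
    exact absurd heq.symm (al_ne_nl c)
  · push_neg at hpm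
    rw [List.getD_append_right _ _ _ _ (by simpa using hpm)] at heq
    rw [List.getD_append_right _ _ _ _ (by simp; omega)]
    have h1 : p + 1 - (List.replicate m nl).length = (p - m) + 1 := by simp; omega
    have h2 : p - (List.replicate m nl).length = p - m := by simp
    rw [h1]
    rw [h2] at heq
    exact h (p - m) c (by omega) heq

lemma good_run {l : List Ltr} (m : ℕ) (c : Bool) (h : Good l) (h0 : l.getD 0 nl = nl) :
    Good (List.replicate m (al c) ++ l) := by
  intro p c' hp heq
  have hlen : p + 1 < m + l.length := by
    simpa [List.length_append, List.length_replicate] using hp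
  rcases lt_trichotomy (p + 1) m with h1 | h1 | h1
  · rw [List.getD_append _ _ _ _ (by simp; omega), getD_rep (by omega)] at heq
    rw [List.getD_append _ _ _ _ (by simpa using h1), getD_rep h1, ← al_inj heq]
    exact fun hc => al_ne_not c' (al_inj heq ▸ hc)
  · rw [List.getD_append_right _ _ _ _ (by simp [h1])]
    have h2 : p + 1 - (List.replicate m (al c)).length = 0 := by simp [h1]
    rw [h2, h0]
    exact fun hc => al_ne_nl (!c') hc.symm
  · have hm : m ≤ p := by omega
    rw [List.getD_append_right _ _ _ _ (by simpa using hm)] at heq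
    rw [List.getD_append_right _ _ _ _ (by simp; omega)]
    have h2 : p + 1 - (List.replicate m (al c)).length = (p - m) + 1 := by simp; omega
    have h3 : p - (List.replicate m (al c)).length = p - m := by simp
    rw [h2]
    rw [h3] at heq
    exact h (p - m) c' (by omega) heq

lemma good_body_run (k : ℕ) (f : Fin k → P3) (j : ℕ) (C : Bool) :
    Good (bodyL k f ++ List.replicate (j + 1) (al C)) := by
  induction k with
  | zero =>
      rw [bodyL, List.nil_append, ← List.append_nil (List.replicate (j+1) (al C))]
      exact good_run _ _ good_nil (by simp [List.getD, nl])
  | succ k ih =>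
      rw [bodyL, blockL, List.append_assoc, List.append_assoc]
      apply good_run
      · exact good_nl _ (ih _)
      · rw [List.getD_append _ _ _ _ (by simp), getD_rep (by omega)]

lemma word_eq_init (k : ℕ) (f : Fin k → P3) (x : P3) :
    wordL k f x =
      (List.replicate x.1 nl ++ (bodyL k f ++ List.replicate (x.2.1 + 1) (al x.2.2)))
        ++ [al (!x.2.2)] := by
  simp [wordL, Rw, List.append_assoc]

lemma word_no_early (k : ℕ) (f : Fin k → P3) (x : P3) {p : ℕ} {c : Bool}
    (hp : p + 2 < (wordL k f x).length)
    (h1 : (wordL k f x).getD p nl = al c) :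
    (wordL k f x).getD (p + 1) nl ≠ al (!c) := by
  rw [word_eq_init] at hp h1 ⊢
  set y := List.replicate x.1 nl ++ (bodyL k f ++ List.replicate (x.2.1 + 1) (al x.2.2)) with hy
  have hlen : p + 1 < y.length := by
    have := hp
    simp only [List.length_append, List.length_cons, List.length_nil] at this
    omega
  rw [List.getD_append _ _ _ _ (by omega)] at h1
  rw [List.getD_append _ _ _ _ hlen]
  exact good_nl _ (good_body_run k f _ _) p c hlen h1

lemma word_decomp (k : ℕ) (f : Fin k → P3) (x : P3) :
    wordL k f x =
      (List.replicate x.1 nl ++ (bodyL k f ++ List.replicate x.2.1 (al x.2.2)))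
        ++ [al x.2.2, al (!x.2.2)] := by
  rw [wordL, Rw, List.replicate_succ' (n := x.2.1)]
  simp [List.append_assoc]

/-! ### injectivity -/

lemma strip (a : Ltr) : ∀ (m m' : ℕ) (x x' : List Ltr), x.getD 0 a ≠ a → x'.getD 0 a ≠ a →
    List.replicate m a ++ x = List.replicate m' a ++ x' → m = m' ∧ x = x' := by
  intro m
  induction m with
  | zero =>
      intro m' x x' hx hx' h
      cases m' with
      | zero => simpa using h
      | succ m' =>
          simp only [List.replicate_zero, List.replicate_succ, List.nil_append,
            List.cons_append] at h
          exact absurd (by rw [h]; rfl) hx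
  | succ m ih =>
      intro m' x x' hx hx' h
      cases m' with
      | zero =>
          simp only [List.replicate_zero, List.replicate_succ, List.nil_append,
            List.cons_append] at h
          exact absurd (by rw [← h]; rfl) hx'
      | succ m' =>
          rw [List.replicate_succ, List.replicate_succ] at h
          simp only [List.cons_append, List.cons.injEq, true_and] at h
          obtain ⟨hm, hx2⟩ := ih m' x x' hx hx' h
          exact ⟨by omega, hx2⟩

lemma Rw_head (k : ℕ) (f : Fin k → P3) (j : ℕ) (C : Bool) :
    ∃ c, (Rw k f j C).getD 0 nl = al c := by
  cases k with
  | zero =>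
      refine ⟨C, ?_⟩
      rw [Rw_zero, List.getD_append _ _ _ _ (by simp), getD_rep (by omega)]
  | succ k =>
      refine ⟨(f 0).2.2, ?_⟩
      rw [Rw_succ, List.getD_append _ _ _ _ (by simp), getD_rep (by omega)]

lemma Rw_inj : ∀ (k k' : ℕ) (f : Fin k → P3) (f' : Fin k' → P3) (j j' : ℕ) (C C' : Bool),
    Rw k f j C = Rw k' f' j' C' → k = k' ∧ HEq f f' ∧ j = j' ∧ C = C' := by
  intro k
  induction k with
  | zero =>
      intro k' f f' j j' C C' h
      cases k' with
      | zero =>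
          rw [Rw_zero, Rw_zero] at h
          have h0 := congrArg (fun l => l.getD 0 nl) h
          rw [List.getD_append _ _ _ _ (by simp), getD_rep (by omega),
            List.getD_append _ _ _ _ (by simp), getD_rep (by omega)] at h0
          have hC : C = C' := al_inj h0
          subst hC
          obtain ⟨hj, -⟩ := strip (al C) (j+1) (j'+1) _ _
            (by rw [List.getD_cons_zero]; exact al_not_ne C)
            (by rw [List.getD_cons_zero]; exact al_not_ne C) h
          exact ⟨rfl, heq_of_eq (Subsingleton.elim f f'), by omega, rfl⟩
      | succ k' =>
          rw [Rw_zero, Rw_succ] at h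
          have h0 := congrArg (fun l => l.getD 0 nl) h
          rw [List.getD_append _ _ _ _ (by simp), getD_rep (by omega),
            List.getD_append _ _ _ _ (by simp), getD_rep (by omega)] at h0
          have hC : C = (f' 0).2.2 := al_inj h0
          rw [← hC] at h
          obtain ⟨-, htail⟩ := strip (al C) (j+1) ((f' 0).1 + 1) _ _
            (by rw [List.getD_cons_zero]; exact al_not_ne C)
            (by rw [List.getD_append _ _ _ _ (by simp), getD_rep (by omega)]
                exact fun hc => al_ne_nl C hc.symm) h
          exfalso
          have h1 := congrArg (fun l => l.getD 0 nl) htail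
          rw [List.getD_cons_zero, List.getD_append _ _ _ _ (by simp),
            getD_rep (by omega)] at h1
          exact al_ne_nl (!C) h1
  | succ k ih =>
      intro k' f f' j j' C C' h
      cases k' with
      | zero =>
          rw [Rw_zero, Rw_succ] at h
          have h0 := congrArg (fun l => l.getD 0 nl) h
          rw [List.getD_append _ _ _ _ (by simp), getD_rep (by omega),
            List.getD_append _ _ _ _ (by simp), getD_rep (by omega)] at h0
          have hC : (f 0).2.2 = C' := al_inj h0
          rw [hC] at h
          obtain ⟨-, htail⟩ := strip (al C') ((f 0).1 + 1) (j'+1) _ _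
            (by rw [List.getD_append _ _ _ _ (by simp), getD_rep (by omega)]
                exact fun hc => al_ne_nl C' hc.symm)
            (by rw [List.getD_cons_zero]; exact al_not_ne C') h
          exfalso
          have h1 := congrArg (fun l => l.getD 0 nl) htail
          rw [List.getD_cons_zero, List.getD_append _ _ _ _ (by simp),
            getD_rep (by omega)] at h1
          exact al_ne_nl (!C') h1.symm
      | succ k' =>
          rw [Rw_succ, Rw_succ] at h
          have h0 := congrArg (fun l => l.getD 0 nl) h
          rw [List.getD_append _ _ _ _ (by simp), getD_rep (by omega),
            List.getD_append _ _ _ _ (by simp), getD_rep (by omega)] at h0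
          have hC : (f 0).2.2 = (f' 0).2.2 := al_inj h0
          rw [← hC] at h
          obtain ⟨hj0, htail⟩ := strip (al (f 0).2.2) ((f 0).1 + 1) ((f' 0).1 + 1) _ _
            (by rw [List.getD_append _ _ _ _ (by simp), getD_rep (by omega)]
                exact fun hc => al_ne_nl (f 0).2.2 hc.symm)
            (by rw [List.getD_append _ _ _ _ (by simp), getD_rep (by omega)]
                exact fun hc => al_ne_nl (f 0).2.2 hc.symm) h
          obtain ⟨hg0, hrest⟩ := strip nl ((f 0).2.1 + 1) ((f' 0).2.1 + 1) _ _
            (by obtain ⟨c1, hc1⟩ := Rw_head k (fun t : Fin k => f t.succ) j C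
                rw [hc1]; exact al_ne_nl c1)
            (by obtain ⟨c1, hc1⟩ := Rw_head k' (fun t : Fin k' => f' t.succ) j' C'
                rw [hc1]; exact al_ne_nl c1) htail
          obtain ⟨hk, hf, hjj, hCC⟩ := ih k' _ _ j j' C C' hrest
          subst hk
          have hft : (fun t : Fin k => f t.succ) = (fun t : Fin k => f' t.succ) := eq_of_heq hf
          have h00 : f 0 = f' 0 := by
            have e1 : (f 0).1 = (f' 0).1 := by omega
            have e2 : (f 0).2.1 = (f' 0).2.1 := by omega
            exact Prod.ext e1 (Prod.ext e2 hC)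
          have hff : f = f' := by
            funext t
            refine Fin.cases h00 (fun t' => ?_) t
            exact congrFun hft t'
          exact ⟨rfl, heq_of_eq hff, hjj, hCC⟩

/-- Index type for winning words -/
def Idx : Type := Σ k : ℕ, (Fin k → P3) × P3

instance : Countable Idx := by unfold Idx; infer_instance

def wrd (i : Idx) : List Ltr := wordL i.1 i.2.1 i.2.2

lemma wrd_inj : Function.Injective wrd := by
  rintro ⟨k, f, x⟩ ⟨k', f', x'⟩ h
  unfold wrd wordL at h
  obtain ⟨c1, hc1⟩ := Rw_head k f x.2.1 x.2.2
  obtain ⟨c2, hc2⟩ := Rw_head k' f' x'.2.1 x'.2.2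
  obtain ⟨h1, hR⟩ := strip nl x.1 x'.1 _ _
    (by rw [hc1]; exact al_ne_nl c1) (by rw [hc2]; exact al_ne_nl c2) h
  obtain ⟨hk, hf, hj, hC⟩ := Rw_inj k k' f f' x.2.1 x'.2.1 x.2.2 x'.2.2 hR
  subst hk
  have hx : x = x' := Prod.ext h1 (Prod.ext hj hC)
  have hfe : f = f' := eq_of_heq hf
  rw [hx, hfe]

/-! ### membership: letters of words -/

lemma body_mem : ∀ (k : ℕ) (f : Fin k → P3) (L : Ltr), L ∈ bodyL k f →
    L = nl ∨ ∃ c, L = al c := by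
  intro k
  induction k with
  | zero => intro f L hL; simp [bodyL] at hL
  | succ k ih =>
      intro f L hL
      rw [bodyL, List.mem_append] at hL
      rcases hL with hL | hL
      · rw [blockL, List.mem_append] at hL
        rcases hL with hL | hL
        · exact Or.inr ⟨_, List.eq_of_mem_replicate hL⟩
        · exact Or.inl (List.eq_of_mem_replicate hL)
      · exact ih _ L hL

lemma word_mem (k : ℕ) (f : Fin k → P3) (x : P3) (L : Ltr) (hL : L ∈ wordL k f x) :
    L = nl ∨ ∃ c, L = al c := by
  rw [wordL, List.mem_append, Rw, List.mem_append, List.mem_append] at hL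
  rcases hL with hL | hL | hL | hL
  · exact Or.inl (List.eq_of_mem_replicate hL)
  · exact body_mem k f L hL
  · exact Or.inr ⟨_, List.eq_of_mem_replicate hL⟩
  · exact Or.inr ⟨_, by simpa using hL⟩

lemma word_getD_ne_tt (k : ℕ) (f : Fin k → P3) (x : P3) {p : ℕ}
    (hp : p < (wordL k f x).length) : (wordL k f x).getD p nl ≠ (true, true) := by
  rw [List.getD_eq_getElem _ _ hp]
  have hm : (wordL k f x)[p] ∈ wordL k f x := List.getElem_mem hp
  rcases word_mem k f x _ hm with h | ⟨c, h⟩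
  · rw [h]; exact nl_ne_tt
  · rw [h]; exact al_ne_tt c

/-! ### Cylinders -/

variable {Ω : Type*}

def rd (ξ η : ℕ → Ω → ℕ) (ω : Ω) (p : ℕ) : Ltr :=
  (decide (1 ≤ ξ p ω), decide (1 ≤ η p ω))

def Cyl (ξ η : ℕ → Ω → ℕ) (w : List Ltr) : Set Ω :=
  {ω | ∀ p < w.length, rd ξ η ω (p + 1) = w.getD p nl}

def bs (b : Bool) : Set ℕ := {m | decide (1 ≤ m) = b}

lemma bs_false : bs false = {0} := by
  ext m; simp [bs]

lemma bs_true : bs true = ({0}ᶜ : Set ℕ) := by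
  ext m
  simp only [bs, Set.mem_setOf_eq, decide_eq_true_eq, Set.mem_compl_iff,
    Set.mem_singleton_iff]
  omega

lemma bs_meas (b : Bool) : MeasurableSet (bs b) := by
  cases b
  · rw [bs_false]; exact measurableSet_singleton 0
  · rw [bs_true]; exact (measurableSet_singleton 0).compl

lemma cyl_eq (ξ η : ℕ → Ω → ℕ) (w : List Ltr) :
    Cyl ξ η w = ⋂ p ∈ Finset.range w.length,
      (ξ (p+1) ⁻¹' bs ((w.getD p nl).1) ∩ η (p+1) ⁻¹' bs ((w.getD p nl).2)) := by
  ext ω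
  simp only [Cyl, Set.mem_setOf_eq, Set.mem_iInter, Finset.mem_range, Set.mem_inter_iff,
    Set.mem_preimage, bs, Set.mem_setOf_eq]
  constructor
  · intro h p hp
    rw [← h p hp]
    exact ⟨rfl, rfl⟩
  · intro h p hp
    obtain ⟨h1, h2⟩ := h p hp
    rw [rd, Prod.ext_iff]
    exact ⟨h1, h2⟩

lemma cyl_meas [MeasurableSpace Ω] (ξ η : ℕ → Ω → ℕ)
    (hmξ : ∀ i, Measurable (ξ i)) (hmη : ∀ i, Measurable (η i)) (w : List Ltr) :
    MeasurableSet (Cyl ξ η w) := by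
  rw [cyl_eq]
  exact Finset.measurableSet_biInter _ fun p _ =>
    ((hmξ (p+1) (bs_meas _)).inter (hmη (p+1) (bs_meas _)))

/-! ### weights -/

def wt (EU EV : ℝ≥0∞) (L : Ltr) : ℝ≥0∞ := (cond L.1 EU EV) * (cond L.2 EU EV)

def WP (EU EV : ℝ≥0∞) (w : List Ltr) : ℝ≥0∞ :=
  ∏ p ∈ Finset.range w.length, wt EU EV (w.getD p nl)

variable {EU EV : ℝ≥0∞}

lemma wt_nl : wt EU EV nl = EV * EV := rfl

lemma wt_al (c : Bool) : wt EU EV (al c) = EU * EV := by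
  cases c
  · simp [wt, al, mul_comm]
  · simp [wt, al]

lemma WP_append (x y : List Ltr) : WP EU EV (x ++ y) = WP EU EV x * WP EU EV y := by
  unfold WP
  rw [List.length_append, Finset.prod_range_add]
  congr 1
  · exact Finset.prod_congr rfl fun p hp => by
      rw [List.getD_append _ _ _ _ (Finset.mem_range.mp hp)]
  · exact Finset.prod_congr rfl fun p hp => by
      rw [List.getD_append_right _ _ _ _ (Nat.le_add_right _ _), Nat.add_sub_cancel_left]

lemma WP_rep (m : ℕ) (L : Ltr) : WP EU EV (List.replicate m L) = (wt EU EV L) ^ m := by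
  unfold WP
  rw [List.length_replicate,
    Finset.prod_congr rfl (fun p hp => by rw [getD_rep (Finset.mem_range.mp hp)]),
    Finset.prod_const, Finset.card_range]

lemma WP_single (L : Ltr) : WP EU EV ([L]) = wt EU EV L := by
  have h : ([L] : List Ltr) = List.replicate 1 L := rfl
  rw [h, WP_rep, pow_one]

lemma WP_body (k : ℕ) (f : Fin k → P3) :
    WP EU EV (bodyL k f) =
      ∏ t : Fin k, ((EU*EV) ^ ((f t).1 + 1) * (EV*EV) ^ ((f t).2.1 + 1)) := by
  induction k with
  | zero => simp [bodyL, WP]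
  | succ k ih =>
      rw [bodyL, WP_append, blockL, WP_append, WP_rep, WP_rep, wt_al, wt_nl, ih,
        Fin.prod_univ_succ]

lemma WP_word (k : ℕ) (f : Fin k → P3) (x : P3) :
    WP EU EV (wordL k f x) =
      (EV*EV) ^ x.1 *
        ((∏ t : Fin k, ((EU*EV) ^ ((f t).1 + 1) * (EV*EV) ^ ((f t).2.1 + 1))) *
          ((EU*EV) ^ (x.2.1 + 1) * (EU*EV))) := by
  rw [wordL, Rw, WP_append, WP_append, WP_append, WP_rep, WP_rep, WP_single, WP_body]
  simp [wt_al, wt_nl]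

/-! ### tsum lemmas -/

lemma tsum_const_bool (x : ℝ≥0∞) : (∑' _ : Bool, x) = 2 * x := by
  rw [tsum_fintype]
  simp [two_mul]

lemma tsum_geo (z : ℝ≥0∞) : ∑' n : ℕ, z ^ (n+1) = z * (1 - z)⁻¹ := by
  simp only [pow_succ]
  rw [ENNReal.tsum_mul_right, ENNReal.tsum_geometric, mul_comm]

lemma tsum_P3 (F G : ℕ → ℝ≥0∞) :
    ∑' y : P3, F y.1 * G y.2.1 = 2 * ((∑' a, F a) * (∑' b, G b)) := by
  rw [ENNReal.tsum_prod']
  have h1 : ∀ a : ℕ, (∑' z : ℕ × Bool, F a * G z.1) = F a * (2 * ∑' b, G b) := by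
    intro a
    rw [ENNReal.tsum_prod']
    have h2 : ∀ b : ℕ, (∑' _ : Bool, F a * G b) = 2 * (F a * G b) := fun b =>
      tsum_const_bool _
    rw [tsum_congr h2, ENNReal.tsum_mul_left, ENNReal.tsum_mul_left]
    ring
  rw [tsum_congr h1, ENNReal.tsum_mul_right]
  ring

def consEquivP3 (k : ℕ) : P3 × (Fin k → P3) ≃ (Fin (k+1) → P3) where
  toFun := fun p => Fin.cons p.1 p.2
  invFun := fun f => (f 0, fun t => f t.succ)
  left_inv := fun p => by simp
  right_inv := fun f => by
    funext t
    exact Fin.cases rfl (fun t' => by simp) t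

lemma tsum_pow (h : P3 → ℝ≥0∞) : ∀ k : ℕ,
    (∑' f : Fin k → P3, ∏ t, h (f t)) = (∑' y, h y) ^ k := by
  intro k
  induction k with
  | zero =>
      rw [pow_zero, tsum_eq_single (fun t => t.elim0)]
      · simp
      · intro b hb; exact absurd (funext fun t => t.elim0).symm hb
  | succ k ih =>
      set e := consEquivP3 k with he
      rw [← e.tsum_eq, ENNReal.tsum_prod']
      have h1 : ∀ (y : P3) (g : Fin k → P3),
          (∏ t : Fin (k+1), h ((e (y, g)) t)) = h y * ∏ t : Fin k, h (g t) := by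
        intro y g
        simp only [he, consEquivP3, Equiv.coe_fn_mk, Fin.prod_univ_succ, Fin.cons_zero,
          Fin.cons_succ]
      have h2 : ∀ y : P3, (∑' g : Fin k → P3, ∏ t : Fin (k+1), h ((e (y, g)) t))
          = h y * (∑' y', h y') ^ k := by
        intro y
        rw [tsum_congr (h1 y), ENNReal.tsum_mul_left, ih]
      rw [tsum_congr h2, ENNReal.tsum_mul_right, pow_succ, mul_comm]


/-! ### last two letters of a word -/

lemma word_last (k : ℕ) (f : Fin k → P3) (x : P3) :
    ∃ m : ℕ, (wordL k f x).length = m + 2 ∧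
      (wordL k f x).getD m nl = al x.2.2 ∧
      (wordL k f x).getD (m+1) nl = al (!x.2.2) := by
  set y := List.replicate x.1 nl ++ (bodyL k f ++ List.replicate x.2.1 (al x.2.2)) with hy
  refine ⟨y.length, ?_, ?_, ?_⟩
  · rw [word_decomp]; simp [hy]; omega
  · rw [word_decomp, ← hy, List.getD_append_right _ _ _ _ le_rfl, Nat.sub_self,
      List.getD_cons_zero]
  · rw [word_decomp, ← hy, List.getD_append_right _ _ _ _ (by omega),
      show y.length + 1 - y.length = 1 from by omega, List.getD_cons_succ,
      List.getD_cons_zero]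

/-! ### cylinder events: subset of the target event -/

variable {Ω : Type*}

lemma cyl_subset_event (ξ η : ℕ → Ω → ℕ) (i : Idx) :
    Cyl ξ η (wrd i) ⊆ {ω | hitU ξ η ω < hitT ξ η ω} := by
  obtain ⟨k, f, x⟩ := i
  intro ω hω
  have hwe : wrd ⟨k, (f, x)⟩ = wordL k f x := rfl
  rw [hwe] at hω
  obtain ⟨m, hlen, hA, hB⟩ := word_last k f x
  have hc : ∀ p < m + 2, rd ξ η ω (p+1) = (wordL k f x).getD p nl := by
    intro p hp
    exact hω p (by rw [hlen]; exact hp)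
  have h1 := hc m (by omega)
  have h2 := hc (m+1) (by omega)
  rw [hA] at h1; rw [hB] at h2
  have e1 : decide (1 ≤ ξ (m+1) ω) = x.2.2 := congrArg Prod.fst h1
  have e2 : decide (1 ≤ η (m+1) ω) = !x.2.2 := congrArg Prod.snd h1
  have e3 : decide (1 ≤ ξ (m+2) ω) = !x.2.2 := congrArg Prod.fst h2
  have e4 : decide (1 ≤ η (m+2) ω) = !(!x.2.2) := congrArg Prod.snd h2
  have hUmem : ((m+2 : ℕ) : ℕ∞) ∈ {c : ℕ∞ | ∃ i : ℕ, c = (i : ℕ∞) ∧ 2 ≤ i ∧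
      ((1 ≤ ξ (i - 1) ω ∧ η (i - 1) ω = 0 ∧ ξ i ω = 0 ∧ 1 ≤ η i ω) ∨
        (ξ (i - 1) ω = 0 ∧ 1 ≤ η (i - 1) ω ∧ 1 ≤ ξ i ω ∧ η i ω = 0))} := by
    refine ⟨m + 2, rfl, by omega, ?_⟩
    have hsub : m + 2 - 1 = m + 1 := by omega
    rw [hsub]
    cases hx : x.2.2
    · rw [hx] at e1 e2 e3 e4
      simp only [Bool.not_false, Bool.not_true, decide_eq_true_eq,
        decide_eq_false_iff_not, not_le, Nat.lt_one_iff] at e1 e2 e3 e4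
      exact Or.inr ⟨e1, e2, e3, e4⟩
    · rw [hx] at e1 e2 e3 e4
      simp only [Bool.not_false, Bool.not_true, decide_eq_true_eq,
        decide_eq_false_iff_not, not_le, Nat.lt_one_iff] at e1 e2 e3 e4
      exact Or.inl ⟨e1, e2, e3, e4⟩
  have hU : hitU ξ η ω ≤ ((m+2 : ℕ) : ℕ∞) := sInf_le hUmem
  have hT : ((m+3 : ℕ) : ℕ∞) ≤ hitT ξ η ω := by
    apply le_sInf
    rintro b ⟨i, rfl, h1i, hxi, hyi⟩
    rw [Nat.cast_le]
    by_contra hcon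
    push_neg at hcon
    have hp : i - 1 < m + 2 := by omega
    have hci := hc (i-1) hp
    rw [show i - 1 + 1 = i from by omega] at hci
    have hrd : rd ξ η ω i = (true, true) := by
      simp [rd, hxi, hyi]
    rw [hrd] at hci
    exact word_getD_ne_tt k f x (by omega) hci.symm
  refine Set.mem_setOf_eq ▸ lt_of_le_of_lt hU (lt_of_lt_of_le ?_ hT)
  rw [Nat.cast_lt]
  omega

/-! ### disjointness -/

lemma cyl_agree_eq (ξ η : ℕ → Ω → ℕ) (i i' : Idx) (ω : Ω)
    (hlen : (wrd i).length ≤ (wrd i').length)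
    (h1 : ω ∈ Cyl ξ η (wrd i)) (h2 : ω ∈ Cyl ξ η (wrd i')) : wrd i = wrd i' := by
  have hagree : ∀ p < (wrd i).length, (wrd i).getD p nl = (wrd i').getD p nl :=
    fun p hp => (h1 p hp).symm.trans (h2 p (lt_of_lt_of_le hp hlen))
  obtain ⟨k, f, x⟩ := i
  obtain ⟨k', f', x'⟩ := i'
  have hwe : wrd ⟨k, (f, x)⟩ = wordL k f x := rfl
  have hwe' : wrd ⟨k', (f', x')⟩ = wordL k' f' x' := rfl
  rw [hwe, hwe'] at hagree hlen ⊢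
  obtain ⟨m, hm, hA, hB⟩ := word_last k f x
  rcases lt_or_eq_of_le hlen with hlt | heq
  · exfalso
    have hA' : (wordL k' f' x').getD m nl = al x.2.2 := by
      rw [← hagree m (by omega)]; exact hA
    have hB' : (wordL k' f' x').getD (m+1) nl = al (!x.2.2) := by
      rw [← hagree (m+1) (by omega)]; exact hB
    exact word_no_early k' f' x' (by omega) hA' hB'
  · apply List.ext_getElem heq
    intro p hp hp'
    have := hagree p hp
    rwa [List.getD_eq_getElem _ _ hp, List.getD_eq_getElem _ _ hp'] at this

lemma cyl_disjoint (ξ η : ℕ → Ω → ℕ) :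
    Pairwise (Function.onFun Disjoint fun i : Idx => Cyl ξ η (wrd i)) := by
  intro i i' hne
  rw [Function.onFun, Set.disjoint_left]
  intro ω h1 h2
  apply hne
  rcases le_total (wrd i).length (wrd i').length with hl | hl
  · exact wrd_inj (cyl_agree_eq ξ η i i' ω hl h1 h2)
  · exact (wrd_inj (cyl_agree_eq ξ η i' i ω hl h2 h1)).symm

/-! ### measure of a cylinder -/

lemma meas_cyl [MeasurableSpace Ω] (μ : Measure Ω)
    (ξ η : ℕ → Ω → ℕ)
    (hindep : iIndepFun (Sum.elim ξ η) μ)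
    (EU EV : ℝ≥0∞)
    (hbξ : ∀ i b, μ (ξ i ⁻¹' bs b) = cond b EU EV)
    (hbη : ∀ i b, μ (η i ⁻¹' bs b) = cond b EU EV)
    (w : List Ltr) :
    μ (Cyl ξ η w) = WP EU EV w := by
  classical
  set n := w.length with hn
  set sets : ℕ ⊕ ℕ → Set ℕ := fun z =>
    Sum.elim (fun i => bs ((w.getD (i-1) nl).1)) (fun i => bs ((w.getD (i-1) nl).2)) z
    with hsets
  set S : Finset (ℕ ⊕ ℕ) :=
    ((Finset.range n).image fun p => Sum.inl (p+1)) ∪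
      ((Finset.range n).image fun p => Sum.inr (p+1)) with hS
  have hmeas : ∀ z, z ∈ S → MeasurableSet (sets z) := by
    intro z _
    rcases z with i | i
    · exact bs_meas _
    · exact bs_meas _
  have hind := hindep.measure_inter_preimage_eq_mul S hmeas
  have hset_eq : (⋂ z ∈ S, Sum.elim ξ η z ⁻¹' sets z) = Cyl ξ η w := by
    ext ω
    simp only [Set.mem_iInter, hS, Finset.mem_union, Finset.mem_image, Finset.mem_range,
      Cyl, Set.mem_setOf_eq, Set.mem_preimage]
    constructor
    · intro h p hp
      have h1 := h (Sum.inl (p+1)) (Or.inl ⟨p, hp, rfl⟩)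
      have h2 := h (Sum.inr (p+1)) (Or.inr ⟨p, hp, rfl⟩)
      simp only [hsets, Sum.elim_inl, Sum.elim_inr, Nat.add_sub_cancel, bs,
        Set.mem_setOf_eq] at h1 h2
      rw [rd, Prod.ext_iff]
      exact ⟨h1, h2⟩
    · rintro h z (⟨p, hp, rfl⟩ | ⟨p, hp, rfl⟩)
      · have hph := congrArg Prod.fst (h p hp)
        simp only [hsets, Sum.elim_inl, Nat.add_sub_cancel, bs, Set.mem_setOf_eq]
        exact hph
      · have hph := congrArg Prod.snd (h p hp)
        simp only [hsets, Sum.elim_inr, Nat.add_sub_cancel, bs, Set.mem_setOf_eq]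
        exact hph
  have hdisj : Disjoint ((Finset.range n).image fun p => (Sum.inl (p+1) : ℕ ⊕ ℕ))
      ((Finset.range n).image fun p => (Sum.inr (p+1) : ℕ ⊕ ℕ)) := by
    rw [Finset.disjoint_left]
    rintro a ha hb
    simp only [Finset.mem_image] at ha hb
    obtain ⟨p, -, rfl⟩ := ha
    obtain ⟨q, -, hq⟩ := hb
    exact absurd hq (by simp)
  rw [← hset_eq, hind, hS, Finset.prod_union hdisj,
    Finset.prod_image (fun a _ b _ hab => by simpa using hab),
    Finset.prod_image (fun a _ b _ hab => by simpa using hab)]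
  simp only [hsets, Sum.elim_inl, Sum.elim_inr, Nat.add_sub_cancel, hbξ, hbη]
  rw [← Finset.prod_mul_distrib]
  rfl

end Stmt12Aux


open Stmt12Aux

/-- If (ξ_i) and (η_i) are independent i.i.d. sequences with P(ξ = j) = ε^j (1−ε), then the
probability that a 0-cell can be broken up satisfies P(U < T) ≥ 2/9. -/
theorem stmt12 {Ω : Type*} [MeasurableSpace Ω] (μ : Measure Ω) [IsProbabilityMeasure μ]
    (ε : ℝ) (hε : 0 < ε) (hε' : ε ≤ 1 / 2)
    (ξ η : ℕ → Ω → ℕ)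
    (hmeasξ : ∀ i, Measurable (ξ i)) (hmeasη : ∀ i, Measurable (η i))
    (hindep : iIndepFun (Sum.elim ξ η) μ)
    (hdistξ : ∀ i j, μ {ω | ξ i ω = j} = ENNReal.ofReal (ε ^ j * (1 - ε)))
    (hdistη : ∀ i j, μ {ω | η i ω = j} = ENNReal.ofReal (ε ^ j * (1 - ε))) :
    (2 / 9 : ℝ≥0∞) ≤ μ {ω | hitU ξ η ω < hitT ξ η ω} := by
  classical
  set U0 : ℝ≥0∞ := ENNReal.ofReal ε with hU0
  set V0 : ℝ≥0∞ := ENNReal.ofReal (1 - ε) with hV0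
  have h1ε : (0:ℝ) ≤ 1 - ε := by linarith
  -- single coordinate measures
  have hbξ : ∀ i b, μ (ξ i ⁻¹' bs b) = cond b U0 V0 := by
    intro i b
    have h0 : ξ i ⁻¹' bs false = {ω | ξ i ω = 0} := by
      rw [bs_false]; rfl
    have hm0 : MeasurableSet (ξ i ⁻¹' bs false) := hmeasξ i (bs_meas false)
    have hv : μ (ξ i ⁻¹' bs false) = V0 := by
      rw [h0, hdistξ i 0, hV0]; norm_num
    cases b
    · exact hv
    · have hcompl : ξ i ⁻¹' bs true = (ξ i ⁻¹' bs false)ᶜ := by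
        rw [bs_true, bs_false, ← Set.preimage_compl]
      rw [hcompl, measure_compl hm0 (measure_ne_top μ _), measure_univ, hv, hV0, hU0,
        ← ENNReal.ofReal_one, ← ENNReal.ofReal_sub _ h1ε]
      norm_num
  have hbη : ∀ i b, μ (η i ⁻¹' bs b) = cond b U0 V0 := by
    intro i b
    have h0 : η i ⁻¹' bs false = {ω | η i ω = 0} := by
      rw [bs_false]; rfl
    have hm0 : MeasurableSet (η i ⁻¹' bs false) := hmeasη i (bs_meas false)
    have hv : μ (η i ⁻¹' bs false) = V0 := by
      rw [h0, hdistη i 0, hV0]; norm_num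
    cases b
    · exact hv
    · have hcompl : η i ⁻¹' bs true = (η i ⁻¹' bs false)ᶜ := by
        rw [bs_true, bs_false, ← Set.preimage_compl]
      rw [hcompl, measure_compl hm0 (measure_ne_top μ _), measure_univ, hv, hV0, hU0,
        ← ENNReal.ofReal_one, ← ENNReal.ofReal_sub _ h1ε]
      norm_num
  have hmcyl : ∀ w, μ (Cyl ξ η w) = WP U0 V0 w := meas_cyl μ ξ η hindep U0 V0 hbξ hbη
  have hchain : (∑' i : Idx, WP U0 V0 (wrd i)) ≤ μ {ω | hitU ξ η ω < hitT ξ η ω} := by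
    calc (∑' i : Idx, WP U0 V0 (wrd i))
        = ∑' i : Idx, μ (Cyl ξ η (wrd i)) := tsum_congr fun i => (hmcyl _).symm
      _ = μ (⋃ i : Idx, Cyl ξ η (wrd i)) :=
          (measure_iUnion (cyl_disjoint ξ η)
            (fun i => cyl_meas ξ η hmeasξ hmeasη (wrd i))).symm
      _ ≤ μ {ω | hitU ξ η ω < hitT ξ η ω} :=
          measure_mono (Set.iUnion_subset fun i => cyl_subset_event ξ η i)
  refine le_trans ?_ hchain
  -- compute the total sum
  have hCx : (∑' x : P3, (V0*V0)^x.1 * ((U0*V0)^(x.2.1+1) * (U0*V0)))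
      = 2*((1-(V0*V0))⁻¹ * (((U0*V0)*(1-(U0*V0))⁻¹)*(U0*V0))) := by
    rw [tsum_P3 (fun a => (V0*V0)^a) (fun b => (U0*V0)^(b+1)*(U0*V0)),
      ENNReal.tsum_geometric, ENNReal.tsum_mul_right, tsum_geo]
  have hGsum : (∑' y : P3, (U0*V0)^(y.1+1) * (V0*V0)^(y.2.1+1))
      = 2*(((U0*V0)*(1-(U0*V0))⁻¹)*((V0*V0)*(1-(V0*V0))⁻¹)) := by
    rw [tsum_P3 (fun a => (U0*V0)^(a+1)) (fun b => (V0*V0)^(b+1)), tsum_geo, tsum_geo]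
  set Gv : ℝ≥0∞ := 2*(((U0*V0)*(1-(U0*V0))⁻¹)*((V0*V0)*(1-(V0*V0))⁻¹)) with hGv
  set Cv : ℝ≥0∞ := 2*((1-(V0*V0))⁻¹ * (((U0*V0)*(1-(U0*V0))⁻¹)*(U0*V0))) with hCv
  set bd : P3 → ℝ≥0∞ := fun y => (U0*V0)^(y.1+1) * (V0*V0)^(y.2.1+1) with hbd
  have htot : (∑' i : Idx, WP U0 V0 (wrd i)) = (1 - Gv)⁻¹ * Cv := by
    calc (∑' i : Idx, WP U0 V0 (wrd i))
        = ∑' (k : ℕ) (fx : (Fin k → P3) × P3), WP U0 V0 (wrd ⟨k, fx⟩) :=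
          ENNReal.tsum_sigma' _
      _ = ∑' (k : ℕ) (fg : Fin k → P3) (x : P3), WP U0 V0 (wordL k fg x) :=
          tsum_congr fun k => ENNReal.tsum_prod'
      _ = ∑' (k : ℕ) (fg : Fin k → P3), ((∏ t : Fin k, bd (fg t)) * Cv) := by
          refine tsum_congr fun k => tsum_congr fun fg => ?_
          have hrw : ∀ x : P3, WP U0 V0 (wordL k fg x)
              = (∏ t : Fin k, bd (fg t)) *
                  ((V0*V0)^x.1 * ((U0*V0)^(x.2.1+1) * (U0*V0))) := by
            intro x
            rw [WP_word]
            simp only [hbd]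
            ring
          rw [tsum_congr hrw, ENNReal.tsum_mul_left, hCx]
      _ = ∑' (k : ℕ), Gv ^ k * Cv := by
          refine tsum_congr fun k => ?_
          rw [ENNReal.tsum_mul_right, tsum_pow bd k, hGsum]
      _ = (1 - Gv)⁻¹ * Cv := by
          rw [ENNReal.tsum_mul_right, ENNReal.tsum_geometric]
  rw [htot]
  -- convert to real numbers
  set rr : ℝ := ε * (1 - ε) with hrr
  set ss : ℝ := (1 - ε) * (1 - ε) with hss
  have hrr0 : (0:ℝ) ≤ rr := by rw [hrr]; positivity
  have hss0 : (0:ℝ) ≤ ss := by rw [hss]; positivity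
  have h1r : (0:ℝ) < 1 - rr := by rw [hrr]; nlinarith
  have h1s : (0:ℝ) < 1 - ss := by rw [hss]; nlinarith
  have hrE : U0 * V0 = ENNReal.ofReal rr := by
    rw [hU0, hV0, hrr, ENNReal.ofReal_mul hε.le]
  have hsE : V0 * V0 = ENNReal.ofReal ss := by
    rw [hV0, hss, ENNReal.ofReal_mul h1ε]
  have hIr : (1 - U0*V0)⁻¹ = ENNReal.ofReal ((1-rr)⁻¹) := by
    rw [hrE, ← ENNReal.ofReal_one, ← ENNReal.ofReal_sub _ hrr0,
      ENNReal.ofReal_inv_of_pos h1r]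
  have hIs : (1 - V0*V0)⁻¹ = ENNReal.ofReal ((1-ss)⁻¹) := by
    rw [hsE, ← ENNReal.ofReal_one, ← ENNReal.ofReal_sub _ hss0,
      ENNReal.ofReal_inv_of_pos h1s]
  set gg : ℝ := 2*((rr*(1-rr)⁻¹)*(ss*(1-ss)⁻¹)) with hgg
  set cc : ℝ := 2*((1-ss)⁻¹*((rr*(1-rr)⁻¹)*rr)) with hcc
  have h2E : (2:ℝ≥0∞) = ENNReal.ofReal 2 := by
    rw [ENNReal.ofReal_ofNat]
  have hGE : Gv = ENNReal.ofReal gg := by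
    rw [hGv, hIr, hIs, hrE, hsE, hgg,
      ENNReal.ofReal_mul (by norm_num : (0:ℝ) ≤ 2),
      ENNReal.ofReal_mul (by positivity : (0:ℝ) ≤ rr*(1-rr)⁻¹),
      ENNReal.ofReal_mul hrr0, ENNReal.ofReal_mul hss0, ← h2E]
  have hCE : Cv = ENNReal.ofReal cc := by
    rw [hCv, hIr, hIs, hrE, hcc,
      ENNReal.ofReal_mul (by norm_num : (0:ℝ) ≤ 2),
      ENNReal.ofReal_mul (by positivity : (0:ℝ) ≤ (1-ss)⁻¹),
      ENNReal.ofReal_mul (by positivity : (0:ℝ) ≤ rr*(1-rr)⁻¹),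
      ENNReal.ofReal_mul hrr0, ← h2E]
  -- key real computations
  have hPoly : (0:ℝ) < 3 - 3*ε + ε^2 := by nlinarith
  have hD : (1-rr)*(1-ss) - 2*rr*ss = ε^2*(3 - 3*ε + ε^2) := by
    rw [hrr, hss]; ring
  have hDpos : (0:ℝ) < ε^2*(3 - 3*ε + ε^2) := by positivity
  have hgg0 : (0:ℝ) ≤ gg := by rw [hgg]; positivity
  have hgg_eq : gg = (2*rr*ss)/((1-rr)*(1-ss)) := by
    rw [hgg]; field_simp
  have hgg_lt : gg < 1 := by
    rw [hgg_eq, div_lt_one (by positivity)]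
    nlinarith [hD, hDpos]
  have h1gg : (0:ℝ) < 1 - gg := by linarith
  have hIG : (1 - Gv)⁻¹ = ENNReal.ofReal ((1-gg)⁻¹) := by
    rw [hGE, ← ENNReal.ofReal_one, ← ENNReal.ofReal_sub _ hgg0,
      ENNReal.ofReal_inv_of_pos h1gg]
  rw [hIG, hCE, ← ENNReal.ofReal_mul (by positivity)]
  have h29 : (2/9 : ℝ≥0∞) = ENNReal.ofReal (2/9) := by
    rw [ENNReal.ofReal_div_of_pos (by norm_num)]
    norm_num
  rw [h29]
  apply ENNReal.ofReal_le_ofReal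
  -- the final real inequality
  have hggval : (1:ℝ) - gg = (ε^2*(3 - 3*ε + ε^2))/((1-rr)*(1-ss)) := by
    rw [← hD, hgg_eq]
    field_simp
  have hT0 : ((1:ℝ)-gg)⁻¹ * cc = 2*(1-ε)^2/(3 - 3*ε + ε^2) := by
    rw [hggval, hcc, inv_div]
    have hr1 : 1 - rr ≠ 0 := h1r.ne'
    have hs1 : 1 - ss ≠ 0 := h1s.ne'
    have hε0 : ε ≠ 0 := hε.ne'
    have hP : 3 - 3*ε + ε^2 ≠ 0 := hPoly.ne'
    field_simp
    rw [hrr]; ring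
  rw [hT0, le_div_iff₀ hPoly]
  nlinarith [sq_nonneg (ε - 1/2)]
end
end

section
/- There exists a constant B > 1, not depending on ε, such that the following holds for every ε ∈ (0, 1/2] and every k ≥ 1: let v_1, …, v_k be integers with |v_1| + ⋯ + |v_k| ≤ 2k, let G_1, …, G_k be i.i.d. Geometric(ε) random variables, and let ρ_1, …, ρ_k be independent random variables such that G_j ≤ ρ_j ≤ G_j + max(v_j, 0) for each j. Then P( Σ_{j=1}^k ρ_j ≥ (B/ε)·k ) ≤ exp(−(ln 16 + 1)·k). -/
open MeasureTheory ProbabilityTheory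
open scoped ENNReal BigOperators

/-- Real inequality: for `0 < ε ≤ 1/2`, `ε * exp (ε/2) * (1 - exp (-(ε/2)))⁻¹ ≤ 4`. -/
lemma geom_real_bound {ε : ℝ} (hε : 0 < ε) (hε2 : ε ≤ 1 / 2) :
    ε * Real.exp (ε / 2) * (1 - Real.exp (-(ε / 2)))⁻¹ ≤ 4 := by
  have hx : 0 < ε / 2 := by linarith
  have hx4 : ε / 2 ≤ 1 / 4 := by linarith
  -- 1 - exp(-(ε/2)) ≥ (ε/2) * exp(-(ε/2))
  have h1 : ε / 2 * Real.exp (-(ε / 2)) ≤ 1 - Real.exp (-(ε / 2)) := by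
    have := Real.add_one_le_exp (ε / 2)
    have hpos := Real.exp_pos (-(ε / 2))
    have hmul : (ε / 2 + 1) * Real.exp (-(ε / 2)) ≤ Real.exp (ε / 2) * Real.exp (-(ε / 2)) :=
      mul_le_mul_of_nonneg_right this hpos.le
    rw [← Real.exp_add] at hmul
    simp only [add_neg_cancel, Real.exp_zero] at hmul
    nlinarith
  have hden : 0 < 1 - Real.exp (-(ε / 2)) := by
    have : Real.exp (-(ε / 2)) < 1 := by
      rw [Real.exp_lt_one_iff]; linarith
    linarith
  rw [mul_inv_le_iff₀ hden]
  -- need : ε * exp(ε/2) ≤ 4 * (1 - exp(-(ε/2)))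
  have h2 : ε / 2 * Real.exp (-(1 / 4 : ℝ)) ≤ 1 - Real.exp (-(ε / 2)) := by
    refine le_trans ?_ h1
    have : Real.exp (-(1 / 4 : ℝ)) ≤ Real.exp (-(ε / 2)) := by
      apply Real.exp_le_exp.2; linarith
    nlinarith
  have h3 : Real.exp (ε / 2) ≤ Real.exp (1 / 4 : ℝ) := Real.exp_le_exp.2 hx4
  -- Reduce to exp(1/4) ≤ 2 * exp(-(1/4)) i.e. exp(1/2) ≤ 2 i.e. e ≤ 4.
  have h4 : Real.exp (1 / 4 : ℝ) ≤ 2 * Real.exp (-(1 / 4 : ℝ)) := by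
    have he : Real.exp (1 / 2 : ℝ) ≤ 2 := by
      have hsq : Real.exp (1 / 2 : ℝ) * Real.exp (1 / 2 : ℝ) = Real.exp 1 := by
        rw [← Real.exp_add]; norm_num
      have h1' : Real.exp 1 < 2.7182818286 := Real.exp_one_lt_d9
      nlinarith [Real.exp_pos (1 / 2 : ℝ)]
    have hpos := Real.exp_pos (-(1 / 4 : ℝ))
    have hkey : Real.exp (1 / 4 : ℝ) = Real.exp (1 / 2 : ℝ) * Real.exp (-(1 / 4 : ℝ)) := by
      rw [← Real.exp_add]; norm_num
    rw [hkey]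
    exact mul_le_mul_of_nonneg_right he hpos.le
  calc ε * Real.exp (ε / 2) ≤ ε * Real.exp (1 / 4 : ℝ) := by
        exact mul_le_mul_of_nonneg_left h3 hε.le
    _ ≤ ε * (2 * Real.exp (-(1 / 4 : ℝ))) := by
        exact mul_le_mul_of_nonneg_left h4 hε.le
    _ = 4 * (ε / 2 * Real.exp (-(1 / 4 : ℝ))) := by ring
    _ ≤ 4 * (1 - Real.exp (-(ε / 2))) := by nlinarith

/-- The key lintegral bound for a geometric variable: `∫ exp((ε/2) G) dμ ≤ 4`. -/
lemma geom_lintegral_le {Ω : Type} [MeasurableSpace Ω] (μ : Measure Ω) [IsProbabilityMeasure μ]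
    {ε : ℝ} (hε : 0 < ε) (hε2 : ε ≤ 1 / 2) (X : Ω → ℕ) (hX : Measurable X)
    (hlaw : ∀ l : ℕ, μ {ω | X ω = l + 1} = ENNReal.ofReal (ε * (1 - ε) ^ l)) :
    ∫⁻ ω, ENNReal.ofReal (Real.exp (ε / 2 * (X ω : ℝ))) ∂μ ≤ ENNReal.ofReal 4 := by
  have hεlt1 : ε < 1 := by linarith
  have h1ε0 : 0 ≤ 1 - ε := by linarith
  -- push forward to ℕ
  have hmapsing : ∀ n : ℕ, (μ.map X) {n} = μ {ω | X ω = n} := by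
    intro n
    rw [Measure.map_apply hX (measurableSet_singleton n)]
    rfl
  have hmeasf : Measurable (fun n : ℕ => ENNReal.ofReal (Real.exp (ε / 2 * (n : ℝ)))) :=
    measurable_from_top
  have hmap : ∫⁻ ω, ENNReal.ofReal (Real.exp (ε / 2 * (X ω : ℝ))) ∂μ
      = ∑' n : ℕ, ENNReal.ofReal (Real.exp (ε / 2 * (n : ℝ))) * (μ.map X) {n} := by
    rw [← lintegral_map hmeasf hX, lintegral_countable']
  -- the fiber at 0 has measure zero
  have hsum_law : ∑' l : ℕ, μ {ω | X ω = l + 1} = 1 := by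
    have hsummable : Summable (fun l : ℕ => ε * (1 - ε) ^ l) :=
      (summable_geometric_of_lt_one h1ε0 (by linarith)).mul_left ε
    have : ∑' l : ℕ, μ {ω | X ω = l + 1}
        = ENNReal.ofReal (∑' l : ℕ, ε * (1 - ε) ^ l) := by
      rw [ENNReal.ofReal_tsum_of_nonneg (fun l => by positivity) hsummable]
      exact tsum_congr fun l => hlaw l
    rw [this, tsum_mul_left, tsum_geometric_of_lt_one h1ε0 (by linarith)]
    rw [show (1 : ℝ) - (1 - ε) = ε by ring]
    rw [mul_inv_cancel₀ hε.ne', ENNReal.ofReal_one]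
  have hzero : μ {ω | X ω = 0} = 0 := by
    have hdisj : Pairwise (Function.onFun Disjoint fun n : ℕ => {ω | X ω = n}) := by
      intro m n hmn
      simp only [Function.onFun, Set.disjoint_left]
      intro ω hm hn
      exact hmn (hm.symm.trans hn)
    have hmeas : ∀ n : ℕ, MeasurableSet {ω | X ω = n} := fun n =>
      hX (measurableSet_singleton n)
    have huniv : (⋃ n : ℕ, {ω | X ω = n}) = Set.univ := by
      ext ω; simp
    have htot : ∑' n : ℕ, μ {ω | X ω = n} = 1 := by
      rw [← measure_iUnion hdisj hmeas, huniv, measure_univ]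
    rw [tsum_eq_zero_add' ENNReal.summable, hsum_law] at htot
    have h1 : μ {ω | X ω = 0} + 1 - 1 = 1 - 1 := by rw [htot]
    rwa [ENNReal.add_sub_cancel_right ENNReal.one_ne_top, tsub_self] at h1
  -- now compute
  rw [hmap, tsum_eq_zero_add' ENNReal.summable]
  have h0 : ENNReal.ofReal (Real.exp (ε / 2 * ((0 : ℕ) : ℝ))) * (μ.map X) {0} = 0 := by
    rw [hmapsing, hzero, mul_zero]
  rw [h0, zero_add]
  -- termwise bound
  have hterm : ∀ l : ℕ,
      ENNReal.ofReal (Real.exp (ε / 2 * ((l + 1 : ℕ) : ℝ))) * (μ.map X) {(l + 1 : ℕ)}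
      ≤ ENNReal.ofReal (ε * Real.exp (ε / 2) * Real.exp (-(ε / 2)) ^ l) := by
    intro l
    rw [hmapsing, hlaw l, ← ENNReal.ofReal_mul (Real.exp_nonneg _)]
    apply ENNReal.ofReal_le_ofReal
    have hcast : ((l + 1 : ℕ) : ℝ) = (l : ℝ) + 1 := by push_cast; ring
    have hexp : Real.exp (ε / 2 * ((l : ℝ) + 1)) = Real.exp (ε / 2) * Real.exp (ε / 2) ^ l := by
      rw [show ε / 2 * ((l : ℝ) + 1) = ε / 2 + (l : ℝ) * (ε / 2) by ring, Real.exp_add,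
        Real.exp_nat_mul]
    rw [hcast, hexp]
    have hbase : Real.exp (ε / 2) * (1 - ε) ≤ Real.exp (-(ε / 2)) := by
      have h1 : 1 - ε ≤ Real.exp (-ε) := by
        have := Real.add_one_le_exp (-ε); linarith
      calc Real.exp (ε / 2) * (1 - ε) ≤ Real.exp (ε / 2) * Real.exp (-ε) :=
            mul_le_mul_of_nonneg_left h1 (Real.exp_nonneg _)
        _ = Real.exp (-(ε / 2)) := by rw [← Real.exp_add]; ring_nf
    have hpow : (Real.exp (ε / 2) * (1 - ε)) ^ l ≤ Real.exp (-(ε / 2)) ^ l :=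
      pow_le_pow_left₀ (by positivity) hbase l
    calc Real.exp (ε / 2) * Real.exp (ε / 2) ^ l * (ε * (1 - ε) ^ l)
        = ε * Real.exp (ε / 2) * (Real.exp (ε / 2) * (1 - ε)) ^ l := by
          rw [mul_pow]; ring
      _ ≤ ε * Real.exp (ε / 2) * Real.exp (-(ε / 2)) ^ l := by
          exact mul_le_mul_of_nonneg_left hpow (by positivity)
  calc ∑' l : ℕ, ENNReal.ofReal (Real.exp (ε / 2 * ((l + 1 : ℕ) : ℝ))) * (μ.map X) {(l + 1 : ℕ)}
      ≤ ∑' l : ℕ, ENNReal.ofReal (ε * Real.exp (ε / 2) * Real.exp (-(ε / 2)) ^ l) :=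
        ENNReal.tsum_le_tsum hterm
    _ = ENNReal.ofReal (∑' l : ℕ, ε * Real.exp (ε / 2) * Real.exp (-(ε / 2)) ^ l) := by
        rw [ENNReal.ofReal_tsum_of_nonneg (fun l => by positivity)
          (((summable_geometric_of_lt_one (Real.exp_nonneg _) (by
            rw [Real.exp_lt_one_iff]; linarith)).mul_left _))]
    _ ≤ ENNReal.ofReal 4 := by
        apply ENNReal.ofReal_le_ofReal
        rw [tsum_mul_left, tsum_geometric_of_lt_one (Real.exp_nonneg _)
          (by rw [Real.exp_lt_one_iff]; linarith)]
        exact geom_real_bound hε hε2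

/-- Lemma 7.7: there is a constant B > 1, not depending on ε, such that for every ε ∈ (0, 1/2],
k ≥ 1, integers v₁, …, v_k with |v₁| + ⋯ + |v_k| ≤ 2k, i.i.d. Geometric(ε) variables
G₁, …, G_k, and independent variables ρ₁, …, ρ_k with G_j ≤ ρ_j ≤ G_j + max(v_j, 0),
one has P( Σ_j ρ_j ≥ (B/ε)k ) ≤ exp(−(ln 16 + 1)k). -/
theorem stmt18 :
    ∃ B : ℝ, 1 < B ∧
      ∀ (ε : ℝ), 0 < ε → ε ≤ 1 / 2 → ∀ (k : ℕ), 1 ≤ k →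
        ∀ (v : Fin k → ℤ), (∑ j, (v j).natAbs) ≤ 2 * k →
          ∀ (Ω : Type) (_ : MeasurableSpace Ω) (μ : Measure Ω), IsProbabilityMeasure μ →
            ∀ (G ρ : Fin k → Ω → ℕ),
              (∀ j, Measurable (G j)) → (∀ j, Measurable (ρ j)) →
              iIndepFun (fun j => fun ω => (G j ω, ρ j ω)) μ →
              (∀ j (l : ℕ), μ {ω | G j ω = l + 1} = ENNReal.ofReal (ε * (1 - ε) ^ l)) →
              (∀ j ω, G j ω ≤ ρ j ω ∧ ρ j ω ≤ G j ω + (v j).toNat) →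
              μ {ω | (B / ε) * k ≤ ((∑ j, ρ j ω : ℕ) : ℝ)} ≤
                ENNReal.ofReal (Real.exp (-(Real.log 16 + 1) * k)) := by
  refine ⟨12, by norm_num, ?_⟩
  intro ε hε hε2 k hk v hv Ω mΩ μ hμ G ρ hGm hρm hIndep hlaw hbound
  set t : ℝ := ε / 2 with ht_def
  have ht : 0 ≤ t := by positivity
  set X : Fin k → Ω → ℝ := fun j ω => (G j ω : ℝ) with hX_def
  have hXm : ∀ j, Measurable (X j) := fun j => measurable_from_top.comp (hGm j)
  -- independence of the G's, hence of the X's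
  have hGind : iIndepFun G μ := by
    have := hIndep.comp (fun _ => (Prod.fst : ℕ × ℕ → ℕ)) (fun _ => measurable_fst)
    exact this
  have hXind : iIndepFun X μ := by
    have := hGind.comp (fun _ => (Nat.cast : ℕ → ℝ)) (fun _ => measurable_from_top)
    exact this
  -- integrability and mgf bounds
  have hlint : ∀ j, ∫⁻ ω, ENNReal.ofReal (Real.exp (t * X j ω)) ∂μ ≤ ENNReal.ofReal 4 :=
    fun j => geom_lintegral_le μ hε hε2 (G j) (hGm j) (hlaw j)
  have hint : ∀ j, Integrable (fun ω => Real.exp (t * X j ω)) μ := by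
    intro j
    refine ⟨(((hXm j).const_mul t).exp).aestronglyMeasurable, ?_⟩
    rw [hasFiniteIntegral_iff_ofReal (Filter.Eventually.of_forall fun ω => Real.exp_nonneg _)]
    exact lt_of_le_of_lt (hlint j) ENNReal.ofReal_lt_top
  have hmgf : ∀ j, mgf (X j) μ t ≤ 4 := by
    intro j
    have heq : mgf (X j) μ t
        = (∫⁻ ω, ENNReal.ofReal (Real.exp (t * X j ω)) ∂μ).toReal := by
      rw [mgf]
      rw [integral_eq_lintegral_of_nonneg_ae
        (Filter.Eventually.of_forall fun ω => Real.exp_nonneg _)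
        (((hXm j).const_mul t).exp).aestronglyMeasurable]
    rw [heq]
    calc (∫⁻ ω, ENNReal.ofReal (Real.exp (t * X j ω)) ∂μ).toReal
        ≤ (ENNReal.ofReal 4).toReal :=
          ENNReal.toReal_mono ENNReal.ofReal_ne_top (hlint j)
      _ = 4 := by rw [ENNReal.toReal_ofReal]; norm_num
  have hsum_int : Integrable (fun ω => Real.exp (t * (∑ j, X j) ω)) μ :=
    hXind.integrable_exp_mul_sum hXm (fun i _ => hint i)
  -- Chernoff
  have hcher := measure_ge_le_exp_mul_mgf (μ := μ) (X := ∑ j, X j) (t := t)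
    (11 / ε * k) ht hsum_int
  have hmgfsum : mgf (∑ j, X j) μ t ≤ 4 ^ k := by
    rw [hXind.mgf_sum hXm Finset.univ]
    calc ∏ j, mgf (X j) μ t ≤ ∏ _j : Fin k, (4 : ℝ) :=
          Finset.prod_le_prod (fun j _ => mgf_nonneg) (fun j _ => hmgf j)
      _ = 4 ^ k := by rw [Finset.prod_const, Finset.card_univ, Fintype.card_fin]
  -- numeric bound
  have hnum : Real.exp (-t * (11 / ε * k)) * 4 ^ k
      ≤ Real.exp (-(Real.log 16 + 1) * k) := by
    have h4 : (4 : ℝ) ^ k = Real.exp (Real.log 4 * k) := by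
      rw [mul_comm, Real.exp_nat_mul, Real.exp_log (by norm_num : (0:ℝ) < 4)]
    have hta : -t * (11 / ε * k) = -(11 / 2) * k := by
      rw [ht_def]; field_simp
    rw [h4, hta, ← Real.exp_add, Real.exp_le_exp]
    have hlog2 : Real.log 2 < 0.6931471808 := Real.log_two_lt_d9
    have hlog4 : Real.log 4 = 2 * Real.log 2 := by
      rw [show (4 : ℝ) = 2 ^ 2 by norm_num, Real.log_pow]; push_cast; ring
    have hlog16 : Real.log 16 = 4 * Real.log 2 := by
      rw [show (16 : ℝ) = 2 ^ 4 by norm_num, Real.log_pow]; push_cast; ring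
    have hkpos : (1 : ℝ) ≤ (k : ℝ) := by exact_mod_cast hk
    have hcoef : -(11 / 2) + Real.log 4 ≤ -(Real.log 16 + 1) := by
      rw [hlog4, hlog16]; linarith
    calc -(11 / 2) * (k : ℝ) + Real.log 4 * k = (-(11 / 2) + Real.log 4) * k := by ring
      _ ≤ -(Real.log 16 + 1) * k := by
          apply mul_le_mul_of_nonneg_right hcoef (by positivity)
  -- set inclusion
  have hincl : {ω | (12 / ε) * k ≤ ((∑ j, ρ j ω : ℕ) : ℝ)}
      ⊆ {ω | 11 / ε * k ≤ (∑ j, X j) ω} := by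
    intro ω hω
    simp only [Set.mem_setOf_eq] at hω ⊢
    have hXval : (∑ j, X j) ω = ((∑ j, G j ω : ℕ) : ℝ) := by
      rw [Finset.sum_apply]; push_cast; rfl
    have hρG : (∑ j, ρ j ω) ≤ (∑ j, G j ω) + 2 * k := by
      calc (∑ j, ρ j ω) ≤ ∑ j, (G j ω + (v j).toNat) :=
            Finset.sum_le_sum fun j _ => (hbound j ω).2
        _ = (∑ j, G j ω) + ∑ j, (v j).toNat := Finset.sum_add_distrib
        _ ≤ (∑ j, G j ω) + ∑ j, (v j).natAbs := by
            gcongr with j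
            omega
        _ ≤ (∑ j, G j ω) + 2 * k := by gcongr
    have hρGr : ((∑ j, ρ j ω : ℕ) : ℝ) ≤ ((∑ j, G j ω : ℕ) : ℝ) + 2 * k := by
      exact_mod_cast hρG
    have hek : 2 * (k : ℝ) ≤ (1 / ε) * k := by
      have h2 : 2 ≤ 1 / ε := by
        rw [le_div_iff₀ hε]; linarith
      apply mul_le_mul_of_nonneg_right h2 (by positivity)
    rw [hXval]
    have : (12 / ε) * k - 2 * k ≤ ((∑ j, G j ω : ℕ) : ℝ) := by linarith
    calc 11 / ε * (k : ℝ) = 12 / ε * k - (1 / ε) * k := by ring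
      _ ≤ 12 / ε * k - 2 * k := by linarith
      _ ≤ ((∑ j, G j ω : ℕ) : ℝ) := this
  -- conclude
  calc μ {ω | (12 / ε) * k ≤ ((∑ j, ρ j ω : ℕ) : ℝ)}
      ≤ μ {ω | 11 / ε * k ≤ (∑ j, X j) ω} := measure_mono hincl
    _ = ENNReal.ofReal (μ {ω | 11 / ε * k ≤ (∑ j, X j) ω}).toReal :=
        (ENNReal.ofReal_toReal (measure_ne_top μ _)).symm
    _ ≤ ENNReal.ofReal (Real.exp (-(Real.log 16 + 1) * k)) := by
        apply ENNReal.ofReal_le_ofReal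
        calc (μ {ω | 11 / ε * k ≤ (∑ j, X j) ω}).toReal
            ≤ Real.exp (-t * (11 / ε * k)) * mgf (∑ j, X j) μ t := hcher
          _ ≤ Real.exp (-t * (11 / ε * k)) * 4 ^ k := by
              apply mul_le_mul_of_nonneg_left hmgfsum (Real.exp_nonneg _)
          _ ≤ Real.exp (-(Real.log 16 + 1) * k) := hnum
end
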